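/- arXiv:1512.01843 — 4 statements merged into one kernel-verified Lean document; each statement's English description precedes it below -/
import Mathlib

section
/- Let n be a circularly symmetric complex Gaussian random variable with variance σ², let a ∈ ℂ, and let c > 0. Then |E[n·exp(i·c·|a+n|²)]| = (σ²·c/(1+σ⁴c²))·|a|·exp(−σ²c²|a|²/(1+σ⁴c²)). -/
open Real MeasureTheory ProbabilityTheory Complex

open scoped NNReal ENNReal

section AuxLemmas
open Filter
open scoped NNReal ENNReal

lemma re_quadratic (b c d : ℂ) (x : ℝ) : (b * x ^ 2 + c * x + d).re = b.re * x^2 + c.re * x + d.re := by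
  simp [Complex.add_re, Complex.mul_re, ← Complex.ofReal_pow]

lemma norm_cexp_quadratic (b c d : ℂ) (x : ℝ) :
    ‖Complex.exp (b * x ^ 2 + c * x + d)‖ = Real.exp (b.re * x^2 + c.re * x + d.re) := by
  rw [Complex.norm_exp, re_quadratic]

lemma quad_le {br cr dr : ℝ} (hb : br < 0) (x : ℝ) :
    br * x^2 + cr * x + dr ≤ br/2 * x^2 + (dr - cr^2/(2*br)) := by
  have h2b : 2*br < 0 := by linarith
  have hdiv : cr^2/(2*br) * (2*br) = cr^2 := div_mul_cancel₀ _ (ne_of_lt h2b)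
  nlinarith [sq_nonneg (br*x + cr)]

lemma integrable_id_mul_cexp_quadratic {b : ℂ} (hb : b.re < 0) (c d : ℂ) :
    Integrable fun x : ℝ => (x : ℂ) * Complex.exp (b * x ^ 2 + c * x + d) := by
  have hb2 : (0:ℝ) < -(b.re / 2) := by linarith
  have hbase : Integrable fun x : ℝ => |x| * Real.exp (b.re/2 * x^2) := by
    have := (integrable_mul_exp_neg_mul_sq hb2).abs
    simpa only [abs_mul, Real.abs_exp, neg_neg] using this
  set M : ℝ := d.re - c.re^2/(2*b.re) with hM
  refine Integrable.mono' ((hbase.const_mul (Real.exp M))) ?_ ?_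
  · apply Continuous.aestronglyMeasurable
    continuity
  · filter_upwards with x
    rw [norm_mul, Complex.norm_real, norm_cexp_quadratic]
    calc ‖x‖ * Real.exp (b.re * x^2 + c.re * x + d.re)
        ≤ |x| * (Real.exp (b.re/2 * x^2 + M)) := by
          rw [Real.norm_eq_abs]
          exact mul_le_mul_of_nonneg_left (Real.exp_le_exp.2 (quad_le hb x)) (abs_nonneg x)
      _ = Real.exp M * (|x| * Real.exp (b.re/2 * x^2)) := by rw [Real.exp_add]; ring

section
variable {b : ℂ}

lemma quad_le' {br cr dr : ℝ} (hb : br < 0) (x : ℝ) :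
    br * x^2 + cr * x + dr ≤ br/2 * x^2 + (dr - cr^2/(2*br)) := by
  have h2b : 2*br < 0 := by linarith
  have hdiv : cr^2/(2*br) * (2*br) = cr^2 := div_mul_cancel₀ _ (ne_of_lt h2b)
  nlinarith [sq_nonneg (br*x + cr)]

lemma tendsto_cexp_quadratic_zero (hb : b.re < 0) (c d : ℂ) (l : Filter ℝ)
    (hl : Tendsto (fun x : ℝ => x^2) l atTop) :
    Tendsto (fun x : ℝ => Complex.exp (b * x ^ 2 + c * x + d)) l (nhds 0) := by
  have hbound : ∀ x : ℝ, ‖Complex.exp (b * x ^ 2 + c * x + d)‖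
      ≤ Real.exp (b.re/2 * x^2 + (d.re - c.re^2/(2*b.re))) := by
    intro x
    rw [Complex.norm_exp, re_quadratic]
    exact Real.exp_le_exp.2 (quad_le' hb x)
  refine squeeze_zero_norm hbound ?_
  · apply Real.tendsto_exp_atBot.comp
    apply tendsto_atBot_add_const_right
    have h2 : Tendsto (fun x:ℝ => -(b.re/2) * x^2) l atTop :=
      hl.const_mul_atTop (by linarith)
    have := tendsto_neg_atTop_atBot.comp h2
    simpa [Function.comp_def, neg_mul] using this

lemma hasDerivAt_cexp_quadratic (b c d : ℂ) (x : ℝ) :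
    HasDerivAt (fun x : ℝ => Complex.exp (b * x ^ 2 + c * x + d))
      (2*b*(x : ℂ)*Complex.exp (b * x ^ 2 + c * x + d) + c*Complex.exp (b * x ^ 2 + c * x + d)) x := by
  have h1 : HasDerivAt (fun z : ℂ => Complex.exp (b * z ^ 2 + c * z + d))
      (Complex.exp (b * (x:ℂ) ^ 2 + c * x + d) * (b * (2 * (x:ℂ)^1) + c)) (x : ℂ) := by
    have := ((((hasDerivAt_pow 2 (x:ℂ)).const_mul b).add ((hasDerivAt_id (x:ℂ)).const_mul c)).add_const d).cexp
    simp only [id_eq, Pi.add_apply] at this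
    convert this using 1
    · rfl
    push_cast
    ring
  have := h1.comp_ofReal
  convert this using 1
  ring

lemma integral_deriv_cexp_quadratic (hb : b.re < 0) (c d : ℂ) :
    ∫ x : ℝ, (2*b*(x:ℂ)*Complex.exp (b * x ^ 2 + c * x + d) + c*Complex.exp (b * x ^ 2 + c * x + d)) = 0 := by
  set f' : ℝ → ℂ := fun x => 2*b*(x:ℂ)*Complex.exp (b * x ^ 2 + c * x + d) + c*Complex.exp (b * x ^ 2 + c * x + d) with hf'
  have hint : Integrable f' := by
    have h1 : Integrable fun x : ℝ => (x : ℂ) * Complex.exp (b * x ^ 2 + c * x + d) :=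
      integrable_id_mul_cexp_quadratic hb c d
    have h2 : Integrable fun x : ℝ => Complex.exp (b * x ^ 2 + c * x + d) :=
      integrable_cexp_quadratic' hb c d
    have := (h1.const_mul (2*b)).add (h2.const_mul c)
    simpa only [hf', mul_assoc, Pi.add_def] using this
  have htop := tendsto_cexp_quadratic_zero hb c d atTop (by simpa using tendsto_pow_atTop (n:=2) two_ne_zero)
  have hbot : Tendsto (fun x : ℝ => Complex.exp (b * x ^ 2 + c * x + d)) atBot (nhds 0) := by
    apply tendsto_cexp_quadratic_zero hb c d
    have : Tendsto (fun x:ℝ => (-x)^2) atBot atTop :=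
      (tendsto_pow_atTop (n:=2) two_ne_zero).comp tendsto_neg_atBot_atTop
    simpa [neg_sq] using this
  have hIoi : ∫ x in Set.Ioi (0:ℝ), f' x = 0 - Complex.exp (b * (0:ℝ) ^ 2 + c * (0:ℝ) + d) := by
    apply integral_Ioi_of_hasDerivAt_of_tendsto' (fun x _ => hasDerivAt_cexp_quadratic b c d x)
      hint.integrableOn htop
  have hIic : ∫ x in Set.Iic (0:ℝ), f' x = Complex.exp (b * (0:ℝ) ^ 2 + c * (0:ℝ) + d) - 0 := by
    apply integral_Iic_of_hasDerivAt_of_tendsto' (fun x _ => hasDerivAt_cexp_quadratic b c d x)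
      hint.integrableOn hbot
  rw [← intervalIntegral.integral_Iic_add_Ioi (b := (0:ℝ)) hint.integrableOn hint.integrableOn, hIoi, hIic]
  ring

lemma integrable_id_mul_cexp_quadratic' (hb : b.re < 0) (c d : ℂ) : True := trivial

lemma integral_id_mul_cexp_quadratic (hb : b.re < 0) (c d : ℂ) :
    ∫ x : ℝ, (x:ℂ) * Complex.exp (b * x ^ 2 + c * x + d)
      = -c/(2*b) * ∫ x : ℝ, Complex.exp (b * x ^ 2 + c * x + d) := by
  have h0 := integral_deriv_cexp_quadratic hb c d
  have h1 : Integrable fun x : ℝ => (x : ℂ) * Complex.exp (b * x ^ 2 + c * x + d) :=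
    integrable_id_mul_cexp_quadratic hb c d
  have h2 : Integrable fun x : ℝ => Complex.exp (b * x ^ 2 + c * x + d) :=
    integrable_cexp_quadratic' hb c d
  rw [show (fun x:ℝ => 2*b*(x:ℂ)*Complex.exp (b * x ^ 2 + c * x + d) + c*Complex.exp (b * x ^ 2 + c * x + d))
      = fun x:ℝ => 2*b*((x:ℂ)*Complex.exp (b * x ^ 2 + c * x + d)) + c*Complex.exp (b * x ^ 2 + c * x + d)
    from funext fun x => by ring] at h0
  rw [integral_add ((h1.const_mul (2*b))) (h2.const_mul c), integral_const_mul, integral_const_mul] at h0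
  have hbne : b ≠ 0 := fun h => by simp [h] at hb
  have h2b : (2:ℂ)*b ≠ 0 := mul_ne_zero two_ne_zero hbne
  rw [div_mul_eq_mul_div, eq_div_iff h2b]
  linear_combination h0
end
open scoped NNReal ENNReal

lemma gaussianReal_integral_eq (V : ℝ≥0) (hV : V ≠ 0) (g : ℝ → ℂ) :
    ∫ x, g x ∂(gaussianReal 0 V) = ∫ x, gaussianPDFReal 0 V x • g x := by
  rw [gaussianReal_of_var_ne_zero 0 hV]
  have h : gaussianPDF 0 V = fun x => ((gaussianPDFReal 0 V x).toNNReal : ℝ≥0∞) := rfl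
  rw [h, integral_withDensity_eq_integral_smul
    (measurable_gaussianPDFReal 0 V).real_toNNReal g]
  congr 1
  funext x
  rw [NNReal.smul_def, Real.coe_toNNReal _ (gaussianPDFReal_nonneg 0 V x)]

lemma gaussianReal_integrable_iff (V : ℝ≥0) (hV : V ≠ 0) (g : ℝ → ℂ) :
    Integrable g (gaussianReal 0 V) ↔ Integrable (fun x => gaussianPDFReal 0 V x • g x) := by
  rw [gaussianReal_of_var_ne_zero 0 hV]
  have h : gaussianPDF 0 V = fun x => ((gaussianPDFReal 0 V x).toNNReal : ℝ≥0∞) := rfl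
  rw [h, integrable_withDensity_iff_integrable_smul
    (measurable_gaussianPDFReal 0 V).real_toNNReal]
  apply integrable_congr
  filter_upwards with x
  rw [NNReal.smul_def, Real.coe_toNNReal _ (gaussianPDFReal_nonneg 0 V x)]

lemma pdf_smul_eq (V : ℝ≥0) (β γ δ : ℂ) (x : ℝ) :
    gaussianPDFReal 0 V x • Complex.exp (β * x^2 + γ * x + δ)
      = (Real.sqrt (2 * π * V))⁻¹ •
        Complex.exp ((β - ((2 * (V:ℝ))⁻¹ : ℂ)) * x^2 + γ * x + δ) := by
  rw [gaussianPDFReal, mul_smul]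
  congr 1
  rw [Complex.real_smul, Complex.ofReal_exp, ← Complex.exp_add]
  congr 1
  push_cast
  ring

section E
variable {V : ℝ≥0} {β γ δ : ℂ}

lemma gauss_integral_cexp (hV : V ≠ 0) (hβ : (β - ((2 * (V:ℝ))⁻¹ : ℂ)).re < 0) :
    ∫ x, Complex.exp (β * x^2 + γ * x + δ) ∂(gaussianReal 0 V)
      = (Real.sqrt (2 * π * V))⁻¹ •
        ((↑π / -(β - ((2 * (V:ℝ))⁻¹ : ℂ))) ^ (1/2 : ℂ) *
          Complex.exp (δ - γ^2 / (4 * (β - ((2 * (V:ℝ))⁻¹ : ℂ))))) := by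
  rw [gaussianReal_integral_eq V hV]
  simp_rw [pdf_smul_eq]
  rw [integral_smul, integral_cexp_quadratic hβ]

lemma gauss_integral_id_mul_cexp (hV : V ≠ 0) (hβ : (β - ((2 * (V:ℝ))⁻¹ : ℂ)).re < 0) :
    ∫ x, (x:ℂ) * Complex.exp (β * x^2 + γ * x + δ) ∂(gaussianReal 0 V)
      = (Real.sqrt (2 * π * V))⁻¹ •
        (-γ / (2 * (β - ((2 * (V:ℝ))⁻¹ : ℂ))) *
        ((↑π / -(β - ((2 * (V:ℝ))⁻¹ : ℂ))) ^ (1/2 : ℂ) *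
          Complex.exp (δ - γ^2 / (4 * (β - ((2 * (V:ℝ))⁻¹ : ℂ)))))) := by
  rw [gaussianReal_integral_eq V hV]
  have hpt : ∀ x : ℝ, gaussianPDFReal 0 V x • ((x:ℂ) * Complex.exp (β * x^2 + γ * x + δ))
      = (Real.sqrt (2 * π * V))⁻¹ •
        ((x:ℂ) * Complex.exp ((β - ((2 * (V:ℝ))⁻¹ : ℂ)) * x^2 + γ * x + δ)) := by
    intro x
    rw [← mul_smul_comm, pdf_smul_eq, mul_smul_comm]
  simp_rw [hpt]
  rw [integral_smul, integral_id_mul_cexp_quadratic hβ, integral_cexp_quadratic hβ]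

lemma gauss_integrable_cexp (hV : V ≠ 0) (hβ : (β - ((2 * (V:ℝ))⁻¹ : ℂ)).re < 0) :
    Integrable (fun x : ℝ => Complex.exp (β * x^2 + γ * x + δ)) (gaussianReal 0 V) := by
  rw [gaussianReal_integrable_iff V hV]
  simp_rw [pdf_smul_eq]
  exact (integrable_cexp_quadratic' hβ γ δ).smul ((Real.sqrt (2 * π * V))⁻¹)

lemma gauss_integrable_id_mul_cexp (hV : V ≠ 0) (hβ : (β - ((2 * (V:ℝ))⁻¹ : ℂ)).re < 0) :
    Integrable (fun x : ℝ => (x:ℂ) * Complex.exp (β * x^2 + γ * x + δ)) (gaussianReal 0 V) := by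
  rw [gaussianReal_integrable_iff V hV]
  have hpt : ∀ x : ℝ, gaussianPDFReal 0 V x • ((x:ℂ) * Complex.exp (β * x^2 + γ * x + δ))
      = (Real.sqrt (2 * π * V))⁻¹ •
        ((x:ℂ) * Complex.exp ((β - ((2 * (V:ℝ))⁻¹ : ℂ)) * x^2 + γ * x + δ)) := by
    intro x
    rw [← mul_smul_comm, pdf_smul_eq, mul_smul_comm]
  simp_rw [hpt]
  exact (integrable_id_mul_cexp_quadratic hβ γ δ).smul ((Real.sqrt (2 * π * V))⁻¹)
end E

end AuxLemmas

/-- The circularly symmetric complex Gaussian distribution `CN(0, v)`: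
real and imaginary parts are independent `N(0, v/2)`. -/
noncomputable def complexGaussian (v : ℝ) : Measure ℂ :=
  Measure.map (fun p : ℝ × ℝ => (p.1 : ℂ) + p.2 * Complex.I)
    ((gaussianReal 0 (v / 2).toNNReal).prod (gaussianReal 0 (v / 2).toNNReal))

theorem abs_expectation_noise_times_phase
    {Ω : Type*} [MeasureSpace Ω] {μ : Measure Ω} [IsProbabilityMeasure μ]
    (σ c : ℝ) (hσ : 0 < σ) (hc : 0 < c) (a : ℂ)
    (n : Ω → ℂ) (hn : Measurable n)
    (hlaw : Measure.map n μ = complexGaussian (σ ^ 2)) :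
    ‖∫ ω, n ω * Complex.exp (Complex.I * c * (‖a + n ω‖) ^ 2) ∂μ‖ =
      (σ ^ 2 * c / (1 + σ ^ 4 * c ^ 2)) * ‖a‖ *
        Real.exp (-σ ^ 2 * c ^ 2 * (‖a‖) ^ 2 / (1 + σ ^ 4 * c ^ 2)) := by
  set V : ℝ≥0 := (σ ^ 2 / 2).toNNReal with hVdef
  have hV2 : (0:ℝ) < σ ^ 2 / 2 := by positivity
  have hVne : V ≠ 0 := by
    simp only [hVdef, ne_eq, Real.toNNReal_eq_zero, not_le]
    exact hV2
  have hVr : (V : ℝ) = σ ^ 2 / 2 := Real.coe_toNNReal _ hV2.le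
  set F : ℂ → ℂ := fun z => z * Complex.exp (Complex.I * c * (‖a + z‖) ^ 2) with hFdef
  have hF : Continuous F := by
    apply continuous_id.mul
    apply Complex.continuous_exp.comp
    apply Continuous.mul continuous_const
    exact ((Complex.continuous_ofReal.comp
      (continuous_norm.comp (continuous_const.add continuous_id))).pow 2)
  have hm : Measurable fun p : ℝ × ℝ => (p.1 : ℂ) + p.2 * Complex.I := by
    fun_prop
  set γm := gaussianReal 0 V with hγm
  have h1 : ∫ ω, F (n ω) ∂μ = ∫ p : ℝ × ℝ, F ((p.1 : ℂ) + p.2 * Complex.I) ∂(γm.prod γm) := by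
    rw [← integral_map hn.aemeasurable hF.aestronglyMeasurable, hlaw, complexGaussian,
      integral_map hm.aemeasurable hF.aestronglyMeasurable]
  -- quadratic parameters
  set β : ℂ := Complex.I * c with hβdef
  set b : ℂ := β - ((2 * (V:ℝ))⁻¹ : ℂ) with hbdef
  have hbeq : b = Complex.I * c - (((σ^2)⁻¹ : ℝ) : ℂ) := by
    rw [hbdef, hβdef]
    congr 1
    push_cast [hVr]
    ring
  obtain ⟨s, hs⟩ : ∃ s : ℝ, s = (σ^2)⁻¹ := ⟨_, rfl⟩
  rw [← hs] at hbeq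
  have hbre : b.re = -s := by simp [hbeq]
  have hbim : b.im = c := by simp [hbeq]
  have hspos : 0 < s := by rw [hs]; positivity
  have hb : b.re < 0 := by rw [hbre]; linarith
  have hb' : (β - ((2 * (V:ℝ))⁻¹ : ℂ)).re < 0 := hbdef ▸ hb
  have hbne : b ≠ 0 := fun h => by rw [h] at hb; simp at hb
  set γ₁ : ℂ := 2 * Complex.I * c * (a.re : ℂ) with hγ₁
  set γ₂ : ℂ := 2 * Complex.I * c * (a.im : ℂ) with hγ₂
  set δ₁ : ℂ := Complex.I * c * (a.re : ℂ)^2 with hδ₁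
  set δ₂ : ℂ := Complex.I * c * (a.im : ℂ)^2 with hδ₂
  have h2 : ∀ p : ℝ × ℝ, F ((p.1:ℂ) + p.2 * Complex.I)
      = ((p.1:ℂ) * Complex.exp (β * p.1^2 + γ₁ * p.1 + δ₁)) * Complex.exp (β * p.2^2 + γ₂ * p.2 + δ₂)
        + Complex.exp (β * p.1^2 + γ₁ * p.1 + δ₁)
          * (Complex.I * ((p.2:ℂ) * Complex.exp (β * p.2^2 + γ₂ * p.2 + δ₂))) := by
    rintro ⟨x, y⟩
    show ((x:ℂ) + y * Complex.I) * Complex.exp (β * (‖a + ((x:ℂ) + y * Complex.I)‖ : ℂ)^2) = _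
    have habs : ((‖a + ((x:ℂ) + y * Complex.I)‖ : ℝ) : ℂ)^2
        = ((a.re + x : ℝ) : ℂ)^2 + ((a.im + y : ℝ) : ℂ)^2 := by
      rw [← Complex.ofReal_pow, Complex.sq_norm, Complex.normSq_apply]
      push_cast
      simp only [Complex.add_re, Complex.add_im, Complex.ofReal_re, Complex.ofReal_im,
        Complex.mul_re, Complex.mul_im, Complex.I_re, Complex.I_im]
      push_cast
      ring
    rw [habs, show β * (((a.re + x : ℝ) : ℂ)^2 + ((a.im + y : ℝ) : ℂ)^2)
        = (β * x^2 + γ₁ * x + δ₁) + (β * y^2 + γ₂ * y + δ₂) from by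
      rw [hγ₁, hγ₂, hδ₁, hδ₂]; push_cast; ring, Complex.exp_add]
    ring
  have hintX1 : Integrable (fun x : ℝ => (x:ℂ) * Complex.exp (β * x^2 + γ₁ * x + δ₁)) γm :=
    gauss_integrable_id_mul_cexp hVne hb'
  have hintX2 : Integrable (fun x : ℝ => (x:ℂ) * Complex.exp (β * x^2 + γ₂ * x + δ₂)) γm :=
    gauss_integrable_id_mul_cexp hVne hb'
  have hintG1 : Integrable (fun x : ℝ => Complex.exp (β * x^2 + γ₁ * x + δ₁)) γm :=
    gauss_integrable_cexp hVne hb'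
  have hintG2 : Integrable (fun x : ℝ => Complex.exp (β * x^2 + γ₂ * x + δ₂)) γm :=
    gauss_integrable_cexp hVne hb'
  have hintIy : Integrable (fun y : ℝ => Complex.I * ((y:ℂ) * Complex.exp (β * y^2 + γ₂ * y + δ₂))) γm :=
    hintX2.const_mul Complex.I
  have h3 : ∫ p : ℝ × ℝ, F ((p.1:ℂ) + p.2 * Complex.I) ∂(γm.prod γm)
      = (∫ x : ℝ, (x:ℂ) * Complex.exp (β * x^2 + γ₁ * x + δ₁) ∂γm)
          * (∫ y : ℝ, Complex.exp (β * y^2 + γ₂ * y + δ₂) ∂γm)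
        + (∫ x : ℝ, Complex.exp (β * x^2 + γ₁ * x + δ₁) ∂γm)
          * (Complex.I * ∫ y : ℝ, (y:ℂ) * Complex.exp (β * y^2 + γ₂ * y + δ₂) ∂γm) := by
    simp_rw [h2]
    rw [integral_add (hintX1.mul_prod hintG2) (hintG1.mul_prod hintIy)]
    congr 1
    · exact integral_prod_mul (fun x : ℝ => (x:ℂ) * Complex.exp (β * x^2 + γ₁ * x + δ₁))
        (fun y : ℝ => Complex.exp (β * y^2 + γ₂ * y + δ₂))
    · refine (integral_prod_mul (fun x : ℝ => Complex.exp (β * x^2 + γ₁ * x + δ₁))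
        (fun y : ℝ => Complex.I * ((y:ℂ) * Complex.exp (β * y^2 + γ₂ * y + δ₂)))).trans ?_
      rw [integral_const_mul]
  set K : ℝ := (Real.sqrt (2 * π * V))⁻¹ with hK
  set S : ℂ := (↑π / -b) ^ (1/2 : ℂ) with hS
  set E₁ : ℂ := Complex.exp (δ₁ - γ₁^2/(4*b)) with hE₁
  set E₂ : ℂ := Complex.exp (δ₂ - γ₂^2/(4*b)) with hE₂
  have hG1 : ∫ x : ℝ, Complex.exp (β * x^2 + γ₁ * x + δ₁) ∂γm = K • (S * E₁) := by
    rw [hγm, gauss_integral_cexp hVne hb', ← hbdef]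
  have hG2 : ∫ x : ℝ, Complex.exp (β * x^2 + γ₂ * x + δ₂) ∂γm = K • (S * E₂) := by
    rw [hγm, gauss_integral_cexp hVne hb', ← hbdef]
  have hX1 : ∫ x : ℝ, (x:ℂ) * Complex.exp (β * x^2 + γ₁ * x + δ₁) ∂γm
      = K • (-γ₁/(2*b) * (S * E₁)) := by
    rw [hγm, gauss_integral_id_mul_cexp hVne hb', ← hbdef]
  have hX2 : ∫ x : ℝ, (x:ℂ) * Complex.exp (β * x^2 + γ₂ * x + δ₂) ∂γm
      = K • (-γ₂/(2*b) * (S * E₂)) := by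
    rw [hγm, gauss_integral_id_mul_cexp hVne hb', ← hbdef]
  set ρ : ℝ := ‖a‖ ^ 2 with hρdef
  have hρ : (ρ:ℂ) = (a.re:ℂ)^2 + (a.im:ℂ)^2 := by
    rw [hρdef, Complex.sq_norm, Complex.normSq_apply]
    push_cast
    ring
  have hπb : (↑π / -b : ℂ) ≠ 0 :=
    div_ne_zero (by exact_mod_cast Real.pi_ne_zero) (neg_ne_zero.2 hbne)
  have hS2 : S * S = ↑π / -b := by
    rw [hS, ← Complex.cpow_add _ _ hπb]
    norm_num
  have hg1sq : γ₁^2 = -(4*(c:ℂ)^2*(a.re:ℂ)^2) := by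
    rw [hγ₁]
    linear_combination (4*(c:ℂ)^2*(a.re:ℂ)^2) * Complex.I_sq
  have hg2sq : γ₂^2 = -(4*(c:ℂ)^2*(a.im:ℂ)^2) := by
    rw [hγ₂]
    linear_combination (4*(c:ℂ)^2*(a.im:ℂ)^2) * Complex.I_sq
  have hE12 : E₁ * E₂ = Complex.exp (Complex.I*↑c*↑ρ + ↑c^2*↑ρ/b) := by
    rw [hE₁, hE₂, ← Complex.exp_add]
    congr 1
    rw [hρ, hg1sq, hg2sq, hδ₁, hδ₂]
    field_simp
    ring
  have hneg : -γ₁/(2*b) + Complex.I * (-γ₂/(2*b)) = -(Complex.I) * ↑c * a / b := by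
    rw [mul_div_assoc', ← add_div]
    rw [show -γ₁ + Complex.I * -γ₂ = 2 * (-(Complex.I) * ↑c * a) from by
      rw [hγ₁, hγ₂]
      conv_rhs => rw [← Complex.re_add_im a]
      ring]
    rw [mul_div_mul_left _ _ (two_ne_zero' ℂ)]
  have hEval : ∫ ω, F (n ω) ∂μ
      = ((K^2 : ℝ) : ℂ) * ((S * S) * ((E₁ * E₂) * (-(Complex.I) * ↑c * a / b))) := by
    rw [h1, h3, hG1, hG2, hX1, hX2, ← hneg]
    simp only [Complex.real_smul]
    push_cast
    ring
  rw [show (∫ ω, n ω * Complex.exp (Complex.I * c * (‖a + n ω‖) ^ 2) ∂μ)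
      = ∫ ω, F (n ω) ∂μ from rfl, hEval, hS2, hE12]
  -- now take absolute values
  rw [norm_mul, norm_mul, norm_mul, norm_div, norm_div, norm_mul, norm_mul, Complex.norm_exp]
  simp only [Complex.norm_real, Complex.norm_I, norm_neg, Real.norm_eq_abs]
  have hΘ : (Complex.I * (c:ℂ) * (ρ:ℂ) + (c:ℂ)^2 * (ρ:ℂ) / b).re = -σ^2*c^2*ρ/(1+σ^4*c^2) := by
    have h1 : (0:ℝ) < 1 + σ^4*c^2 := by positivity
    simp only [Complex.add_re, Complex.mul_re, Complex.div_re, Complex.I_re, Complex.I_im,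
      Complex.ofReal_re, Complex.ofReal_im, Complex.normSq_apply, hbre, hbim, Complex.mul_im,
      ← Complex.ofReal_pow]
    rw [hs]
    field_simp
    ring
  rw [hΘ, _root_.abs_of_nonneg (sq_nonneg K), _root_.abs_of_pos Real.pi_pos, _root_.abs_of_pos hc]
  have hA2 : ‖b‖ * ‖b‖ = s^2 + c^2 := by
    rw [← sq, Complex.sq_norm, Complex.normSq_apply, hbre, hbim]
    ring
  have hApos : 0 < ‖b‖ := norm_pos_iff.2 hbne
  have hK2 : K^2 = (2*π*(V:ℝ))⁻¹ := by
    rw [hK, inv_pow, Real.sq_sqrt (by positivity)]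
  have hsc : (0:ℝ) < s^2 + c^2 := by positivity
  have key : π / ‖b‖ * (rexp (-σ^2*c^2*ρ/(1+σ^4*c^2)) * (1 * c * ‖a‖ / ‖b‖))
      = π * c * ‖a‖ * rexp (-σ^2*c^2*ρ/(1+σ^4*c^2)) / (s^2+c^2) := by
    rw [← hA2]
    field_simp
  rw [key, hK2, hVr, hs]
  have h1 : (0:ℝ) < 1 + σ^4*c^2 := by positivity
  have hσ2 : σ ≠ 0 := ne_of_gt hσ
  field_simp
end

section
/- Let n ∼ CN(0, σ²), a ∈ ℂ, c > 0. Then sup over a ∈ ℂ of |E[n·exp(i·c·|a+n|²)]| = σ/√(2e(1+σ⁴c²)). -/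
open Real MeasureTheory ProbabilityTheory Complex
open scoped NNReal ENNReal

-- integrability of x * cexp(quadratic)
lemma myint_x_mul {b : ℂ} (hb : b.re < 0) (β : ℂ) :
    Integrable (fun x : ℝ => (x : ℂ) * Complex.exp (b * x ^ 2 + β * x)) := by
  have h1 : Integrable (fun x : ℝ => Complex.exp (b * x ^ 2 + (β + 1) * x + 0)) :=
    integrable_cexp_quadratic' hb _ _
  have h2 : Integrable (fun x : ℝ => Complex.exp (b * x ^ 2 + (β - 1) * x + 0)) :=
    integrable_cexp_quadratic' hb _ _
  have hmeas : AEStronglyMeasurable (fun x : ℝ => (x : ℂ) * Complex.exp (b * x ^ 2 + β * x))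
      volume := by
    apply Continuous.aestronglyMeasurable
    exact continuous_ofReal.mul (Complex.continuous_exp.comp (by continuity))
  refine Integrable.mono' (h1.norm.add h2.norm) hmeas (ae_of_all _ fun x => ?_)
  have hre : ∀ γ : ℂ, (b * x ^ 2 + γ * x + 0).re = (b * x^2 + β * x).re + (γ - β).re * x := by
    intro γ; simp [Complex.add_re, Complex.mul_re, Complex.ofReal_re, Complex.ofReal_im]; ring
  have hx : |x| ≤ Real.exp x + Real.exp (-x) := by
    rcases le_total 0 x with h | h
    · calc |x| = x := abs_of_nonneg h
        _ ≤ Real.exp x := by linarith [Real.add_one_le_exp x]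
        _ ≤ _ := le_add_of_nonneg_right (Real.exp_pos _).le
    · calc |x| = -x := abs_of_nonpos h
        _ ≤ Real.exp (-x) := by linarith [Real.add_one_le_exp (-x)]
        _ ≤ _ := le_add_of_nonneg_left (Real.exp_pos _).le
  calc ‖(x : ℂ) * Complex.exp (b * x ^ 2 + β * x)‖
      = |x| * Real.exp ((b * x^2 + β * x).re) := by
        rw [norm_mul, Complex.norm_real, Real.norm_eq_abs,
          Complex.norm_exp]
    _ ≤ (Real.exp x + Real.exp (-x)) * Real.exp ((b * x^2 + β * x).re) :=
        mul_le_mul_of_nonneg_right hx (Real.exp_pos _).le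
    _ = ‖Complex.exp (b * x ^ 2 + (β + 1) * x + 0)‖ + ‖Complex.exp (b * x ^ 2 + (β - 1) * x + 0)‖ := by
        rw [Complex.norm_exp, Complex.norm_exp,
          hre (β + 1), hre (β - 1)]
        rw [add_mul, ← Real.exp_add, ← Real.exp_add]
        ring_nf
        simp

lemma myintegral_x_mul {b : ℂ} (hb : b.re < 0) (β : ℂ) :
    ∫ x : ℝ, (x : ℂ) * Complex.exp (b * x ^ 2 + β * x) =
      (-β / (2 * b)) * ∫ x : ℝ, Complex.exp (b * x ^ 2 + β * x) := by
  have hb0 : b ≠ 0 := fun h => by simp [h] at hb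
  have hg : Integrable (fun x : ℝ => Complex.exp (b * x ^ 2 + β * x)) := by
    simpa using integrable_cexp_quadratic' hb β 0
  have hxg := myint_x_mul hb β
  have hderiv : ∀ x : ℝ, HasDerivAt (fun x : ℝ => Complex.exp (b * x ^ 2 + β * x))
      ((2 * b * x + β) * Complex.exp (b * x ^ 2 + β * x)) x := by
    intro x
    have hC : HasDerivAt (fun z : ℂ => b * z ^ 2 + β * z) (2 * b * x + β) (x:ℂ) := by
      have h1 := ((hasDerivAt_pow 2 (x:ℂ)).const_mul b).add ((hasDerivAt_id (x:ℂ)).const_mul β)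
      norm_num at h1
      rw [show (2 * b * x + β) = b * (2 * x) + β by ring]
      exact h1
    simpa [Function.comp, mul_comm] using hC.cexp.comp_ofReal
  have hint' : Integrable (fun x : ℝ => (2 * b * x + β) * Complex.exp (b * x ^ 2 + β * x)) := by
    have := (hxg.const_mul (2 * b)).add (hg.const_mul β)
    refine this.congr (ae_of_all _ fun x => ?_)
    simp only [Pi.add_apply]
    ring
  have hzero := integral_eq_zero_of_hasDerivAt_of_integrable hderiv hint' hg
  have hsplit : ∫ x : ℝ, (2 * b * x + β) * Complex.exp (b * x ^ 2 + β * x) =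
      2 * b * (∫ x : ℝ, (x:ℂ) * Complex.exp (b * x ^ 2 + β * x)) +
      β * ∫ x : ℝ, Complex.exp (b * x ^ 2 + β * x) := by
    rw [← integral_const_mul, ← integral_const_mul, ← integral_add (hxg.const_mul _) (hg.const_mul _)]
    congr 1; ext x; ring
  rw [hsplit] at hzero
  rw [div_mul_eq_mul_div, eq_div_iff (mul_ne_zero two_ne_zero hb0)]
  linear_combination hzero

lemma gauss_density (v : ℝ≥0) (hv : v ≠ 0) :
    gaussianReal 0 v =
      volume.withDensity (fun x => ((gaussianPDFReal 0 v x).toNNReal : ℝ≥0∞)) := by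
  rw [gaussianReal_of_var_ne_zero 0 hv]
  congr 1

lemma gauss_integral (v : ℝ≥0) (hv : v ≠ 0) (f : ℝ → ℂ) :
    ∫ x, f x ∂(gaussianReal 0 v) = ∫ x, gaussianPDFReal 0 v x • f x := by
  rw [gauss_density v hv, integral_withDensity_eq_integral_smul
    (measurable_gaussianPDFReal 0 v).real_toNNReal]
  congr 1; ext x
  rw [NNReal.smul_def, Real.coe_toNNReal _ (gaussianPDFReal_nonneg 0 v x)]

lemma gauss_integrable (v : ℝ≥0) (hv : v ≠ 0) (f : ℝ → ℂ)
    (h : Integrable (fun x => gaussianPDFReal 0 v x • f x)) :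
    Integrable f (gaussianReal 0 v) := by
  rw [gauss_density v hv, integrable_withDensity_iff_integrable_smul
    (measurable_gaussianPDFReal 0 v).real_toNNReal]
  refine h.congr (ae_of_all _ fun x => ?_)
  simp only [NNReal.smul_def, Real.coe_toNNReal _ (gaussianPDFReal_nonneg 0 v x)]

section oneD

variable {s c t : ℝ}

lemma hb_re (hs : 0 < s) (c : ℝ) : (Complex.I * c - ((1/(2*s) : ℝ) : ℂ)).re < 0 := by
  simp [Complex.sub_re, Complex.mul_re]
  positivity

lemma hv_ne (hs : 0 < s) : s.toNNReal ≠ 0 := by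
  simp [Real.toNNReal_eq_zero]; linarith

lemma point_eq (hs : 0 < s) (c t x : ℝ) :
    ((gaussianPDFReal 0 s.toNNReal x : ℝ) : ℂ) * Complex.exp (Complex.I * c * ((t + x : ℝ) : ℂ) ^ 2) =
      (((Real.sqrt (2 * π * s) : ℝ) : ℂ))⁻¹ *
        Complex.exp ((Complex.I * c - ((1/(2*s) : ℝ) : ℂ)) * (x:ℂ) ^ 2 +
          (2 * Complex.I * c * t) * (x:ℂ) + Complex.I * c * (t:ℂ) ^ 2) := by
  have hcoe : ((s.toNNReal : ℝ)) = s := Real.coe_toNNReal _ hs.le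
  rw [gaussianPDFReal]
  rw [hcoe, sub_zero]
  push_cast
  rw [mul_assoc, ← Complex.exp_add]
  congr 1
  have h2s : (s:ℂ) ≠ 0 := by exact_mod_cast hs.ne'
  field_simp
  ring

lemma pdf_smul_eq_s10 (x : ℝ) (z : ℂ) :
    gaussianPDFReal 0 s.toNNReal x • z = ((gaussianPDFReal 0 s.toNNReal x : ℝ) : ℂ) * z :=
  Complex.real_smul

lemma J0_integrable (hs : 0 < s) (c t : ℝ) :
    Integrable (fun x : ℝ => Complex.exp (Complex.I * c * ((t + x : ℝ) : ℂ) ^ 2))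
      (gaussianReal 0 s.toNNReal) := by
  refine gauss_integrable _ (hv_ne hs) _ ?_
  simp_rw [pdf_smul_eq_s10, point_eq hs c t]
  exact (integrable_cexp_quadratic' (hb_re hs c) _ _).const_mul _

lemma expand_exp (b β d : ℂ) (x : ℝ) :
    Complex.exp (b * (x:ℂ) ^ 2 + β * (x:ℂ) + d) =
      Complex.exp (b * (x:ℂ) ^ 2 + β * (x:ℂ)) * Complex.exp d := by
  rw [← Complex.exp_add]

lemma J1_point (hs : 0 < s) (c t : ℝ) (x : ℝ) :
    gaussianPDFReal 0 s.toNNReal x •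
      ((x:ℂ) * Complex.exp (Complex.I * c * ((t + x : ℝ) : ℂ) ^ 2)) =
      ((((Real.sqrt (2 * π * s) : ℝ) : ℂ))⁻¹ * Complex.exp (Complex.I * c * (t:ℂ) ^ 2)) *
      ((x:ℂ) * Complex.exp ((Complex.I * c - ((1/(2*s) : ℝ) : ℂ)) * (x:ℂ) ^ 2 +
        (2 * Complex.I * c * t) * (x:ℂ))) := by
  rw [pdf_smul_eq_s10]
  calc ((gaussianPDFReal 0 s.toNNReal x : ℝ) : ℂ) *
        ((x:ℂ) * Complex.exp (Complex.I * c * ((t + x : ℝ) : ℂ) ^ 2))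
      = (x:ℂ) * (((gaussianPDFReal 0 s.toNNReal x : ℝ) : ℂ) *
          Complex.exp (Complex.I * c * ((t + x : ℝ) : ℂ) ^ 2)) := by ring
    _ = (x:ℂ) * ((((Real.sqrt (2 * π * s) : ℝ) : ℂ))⁻¹ *
          Complex.exp ((Complex.I * c - ((1/(2*s) : ℝ) : ℂ)) * (x:ℂ) ^ 2 +
            (2 * Complex.I * c * t) * (x:ℂ) + Complex.I * c * (t:ℂ) ^ 2)) := by
        rw [point_eq hs c t x]
    _ = _ := by rw [expand_exp]; ring

lemma J0_point (hs : 0 < s) (c t : ℝ) (x : ℝ) :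
    gaussianPDFReal 0 s.toNNReal x • Complex.exp (Complex.I * c * ((t + x : ℝ) : ℂ) ^ 2) =
      ((((Real.sqrt (2 * π * s) : ℝ) : ℂ))⁻¹ * Complex.exp (Complex.I * c * (t:ℂ) ^ 2)) *
      Complex.exp ((Complex.I * c - ((1/(2*s) : ℝ) : ℂ)) * (x:ℂ) ^ 2 +
        (2 * Complex.I * c * t) * (x:ℂ)) := by
  rw [pdf_smul_eq_s10, point_eq hs c t x, expand_exp]
  ring

lemma J1_integrable (hs : 0 < s) (c t : ℝ) :
    Integrable (fun x : ℝ => (x:ℂ) * Complex.exp (Complex.I * c * ((t + x : ℝ) : ℂ) ^ 2))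
      (gaussianReal 0 s.toNNReal) := by
  refine gauss_integrable _ (hv_ne hs) _ ?_
  simp_rw [J1_point hs c t]
  exact (myint_x_mul (hb_re hs c) _).const_mul _

lemma J0_val (hs : 0 < s) (c t : ℝ) :
    ∫ x, Complex.exp (Complex.I * c * ((t + x : ℝ) : ℂ) ^ 2) ∂(gaussianReal 0 s.toNNReal) =
      (((Real.sqrt (2 * π * s) : ℝ) : ℂ))⁻¹ *
        ((↑π / -(Complex.I * c - ((1/(2*s) : ℝ) : ℂ))) ^ (1/2 : ℂ) *
          Complex.exp (Complex.I * c * (t:ℂ) ^ 2 -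
            (2 * Complex.I * c * t) ^ 2 / (4 * (Complex.I * c - ((1/(2*s) : ℝ) : ℂ))))) := by
  rw [gauss_integral _ (hv_ne hs)]
  simp_rw [pdf_smul_eq_s10, point_eq hs c t]
  rw [MeasureTheory.integral_const_mul, integral_cexp_quadratic (hb_re hs c)]

lemma J1_val (hs : 0 < s) (c t : ℝ) :
    ∫ x, (x:ℂ) * Complex.exp (Complex.I * c * ((t + x : ℝ) : ℂ) ^ 2) ∂(gaussianReal 0 s.toNNReal) =
      (-(2 * Complex.I * c * t) / (2 * (Complex.I * c - ((1/(2*s) : ℝ) : ℂ)))) *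
        ∫ x, Complex.exp (Complex.I * c * ((t + x : ℝ) : ℂ) ^ 2) ∂(gaussianReal 0 s.toNNReal) := by
  rw [gauss_integral _ (hv_ne hs), gauss_integral _ (hv_ne hs)]
  simp_rw [J1_point hs c t, J0_point hs c t]
  rw [MeasureTheory.integral_const_mul, MeasureTheory.integral_const_mul,
    myintegral_x_mul (hb_re hs c)]
  ring

end oneD

lemma abs_J0 {σ c : ℝ} (hσ : 0 < σ) (hc : 0 < c) (t : ℝ) :
    ‖∫ x, Complex.exp (Complex.I * c * ((t + x : ℝ) : ℂ) ^ 2)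
        ∂(gaussianReal 0 (σ^2/2).toNNReal)‖ =
      (Real.sqrt (Real.sqrt (1 + σ^4*c^2)))⁻¹ *
        Real.exp (-(σ^2*c^2*t^2)/(1 + σ^4*c^2)) := by
  have hs : (0:ℝ) < σ^2/2 := by positivity
  set s : ℝ := σ^2/2 with hsdef
  set D : ℝ := 1 + σ^4*c^2 with hDdef
  have hD : 0 < D := by positivity
  set b : ℂ := Complex.I * c - ((1/(2*s) : ℝ) : ℂ) with hbdef
  have hbre : b.re = -(1/(2*s)) := by simp [hbdef]
  have hbim : b.im = c := by simp [hbdef]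
  have hb0 : b ≠ 0 := by
    intro h
    rw [h] at hbim; simp at hbim; exact hc.ne hbim
  have hσ2 : σ^2 ≠ 0 := by positivity
  have hnormSq : Complex.normSq b = D / σ^4 := by
    rw [Complex.normSq_apply, hbre, hbim, hsdef, hDdef]
    field_simp
  have habsb : ‖b‖ = Real.sqrt D / σ^2 := by
    rw [Complex.norm_def, hnormSq, show σ^4 = (σ^2)^2 by ring,
      Real.sqrt_div hD.le, Real.sqrt_sq (by positivity)]
  have hq : (Complex.I * c * (t:ℂ) ^ 2 -
      (2 * Complex.I * c * t) ^ 2 / (4 * b)).re = -(σ^2*c^2*t^2)/D := by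
    have hrw : Complex.I * c * (t:ℂ) ^ 2 - (2 * Complex.I * c * t) ^ 2 / (4 * b) =
        ((c^2*t^2 : ℝ) : ℂ) * b⁻¹ + ((c*t^2 : ℝ) : ℂ) * Complex.I := by
      have h4 : (2 * Complex.I * (c:ℂ) * (t:ℂ))^2 = ((-4 * (c^2*t^2) : ℝ) : ℂ) := by
        push_cast
        rw [mul_pow, mul_pow, mul_pow, Complex.I_sq]
        ring
      rw [h4]
      push_cast
      field_simp
      ring
    rw [hrw]
    simp only [Complex.add_re, Complex.mul_re, Complex.ofReal_re, Complex.ofReal_im,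
      Complex.I_re, Complex.I_im, Complex.inv_re, Complex.inv_im]
    rw [hnormSq, hbre]
    field_simp
    ring
  rw [J0_val hs c t]
  rw [norm_mul, norm_mul, norm_inv, Complex.norm_real, Real.norm_eq_abs,
    _root_.abs_of_nonneg (Real.sqrt_nonneg _), Complex.norm_exp, hq,
    show (1/2 : ℂ) = ((1/2 : ℝ) : ℂ) by norm_num, Complex.norm_cpow_real,
    norm_div, norm_neg, Complex.norm_real, Real.norm_eq_abs, _root_.abs_of_nonneg Real.pi_pos.le,
    habsb, ← Real.sqrt_eq_rpow]
  have hDs : (0:ℝ) < Real.sqrt D := Real.sqrt_pos.mpr hD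
  have hkey : (Real.sqrt (2*π*s))⁻¹ * Real.sqrt (π/(Real.sqrt D/σ^2)) =
      (Real.sqrt (Real.sqrt D))⁻¹ := by
    rw [show (2:ℝ)*π*s = π*σ^2 by rw [hsdef]; ring,
      show π/(Real.sqrt D/σ^2) = (π*σ^2)/Real.sqrt D by field_simp,
      Real.sqrt_div (by positivity)]
    have hpos : (0:ℝ) < Real.sqrt (π * σ^2) := Real.sqrt_pos.mpr (by positivity)
    field_simp
  rw [← mul_assoc, hkey]

lemma F_val {σ c : ℝ} (hσ : 0 < σ) (hc : 0 < c) (a : ℂ) :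
    ∫ z, z * Complex.exp (Complex.I * c * ((‖a + z‖ : ℝ) : ℂ) ^ 2)
        ∂(complexGaussian (σ^2)) =
      (∫ x, (x:ℂ) * Complex.exp (Complex.I * c * ((a.re + x : ℝ) : ℂ) ^ 2)
          ∂(gaussianReal 0 (σ^2/2).toNNReal)) *
        (∫ y, Complex.exp (Complex.I * c * ((a.im + y : ℝ) : ℂ) ^ 2)
          ∂(gaussianReal 0 (σ^2/2).toNNReal)) +
      Complex.I *
        ((∫ x, Complex.exp (Complex.I * c * ((a.re + x : ℝ) : ℂ) ^ 2)
            ∂(gaussianReal 0 (σ^2/2).toNNReal)) *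
         (∫ y, (y:ℂ) * Complex.exp (Complex.I * c * ((a.im + y : ℝ) : ℂ) ^ 2)
            ∂(gaussianReal 0 (σ^2/2).toNNReal))) := by
  have hs : (0:ℝ) < σ^2/2 := by positivity
  rw [complexGaussian]
  rw [integral_map (by fun_prop) (by apply Continuous.aestronglyMeasurable; continuity)]
  have hpt : ∀ p : ℝ × ℝ,
      ((p.1:ℂ) + p.2 * Complex.I) * Complex.exp (Complex.I * c *
        ((‖a + ((p.1:ℂ) + p.2 * Complex.I)‖ : ℝ) : ℂ) ^ 2) =
      ((p.1:ℂ) * Complex.exp (Complex.I * c * ((a.re + p.1 : ℝ) : ℂ) ^ 2)) *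
        Complex.exp (Complex.I * c * ((a.im + p.2 : ℝ) : ℂ) ^ 2) +
      Complex.I * (Complex.exp (Complex.I * c * ((a.re + p.1 : ℝ) : ℂ) ^ 2) *
        ((p.2:ℂ) * Complex.exp (Complex.I * c * ((a.im + p.2 : ℝ) : ℂ) ^ 2))) := by
    intro p
    have habs : Complex.I * (c:ℂ) * ((‖a + ((p.1:ℂ) + p.2 * Complex.I)‖ : ℝ) : ℂ) ^ 2 =
        Complex.I * c * ((a.re + p.1 : ℝ) : ℂ) ^ 2 + Complex.I * c * ((a.im + p.2 : ℝ) : ℂ) ^ 2 := by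
      rw [← Complex.ofReal_pow, Complex.sq_norm, Complex.normSq_apply]
      simp only [Complex.add_re, Complex.add_im, Complex.add_re, Complex.mul_re, Complex.mul_im,
        Complex.ofReal_re, Complex.ofReal_im, Complex.I_re, Complex.I_im]
      push_cast
      ring
    rw [habs, Complex.exp_add]
    ring
  rw [integral_congr_ae (ae_of_all _ hpt)]
  rw [integral_add (((J1_integrable hs c a.re).mul_prod (J0_integrable hs c a.im)))
    (((J0_integrable hs c a.re).mul_prod (J1_integrable hs c a.im)).const_mul _),
    MeasureTheory.integral_const_mul, ← integral_prod_mul, ← integral_prod_mul]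

lemma abs_F {σ c : ℝ} (hσ : 0 < σ) (hc : 0 < c) (a : ℂ) :
    ‖∫ z, z * Complex.exp (Complex.I * c * ((‖a + z‖ : ℝ) : ℂ) ^ 2)
        ∂(complexGaussian (σ^2))‖ =
      (σ^2*c/(1 + σ^4*c^2)) * ‖a‖ *
        Real.exp (-(σ^2*c^2*(‖a‖)^2)/(1 + σ^4*c^2)) := by
  have hs : (0:ℝ) < σ^2/2 := by positivity
  set s : ℝ := σ^2/2 with hsdef
  set D : ℝ := 1 + σ^4*c^2 with hDdef
  have hD : 0 < D := by positivity
  set b : ℂ := Complex.I * c - ((1/(2*s) : ℝ) : ℂ) with hbdef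
  have hbim : b.im = c := by simp [hbdef]
  have hb0 : b ≠ 0 := by
    intro h; rw [h] at hbim; simp at hbim; exact hc.ne hbim
  have hσ2 : σ^2 ≠ 0 := by positivity
  have hnormSq : Complex.normSq b = D / σ^4 := by
    rw [Complex.normSq_apply, hDdef]
    have hbre : b.re = -(1/(2*s)) := by simp [hbdef]
    rw [hbre, hbim, hsdef]
    field_simp
  have habsb : ‖b‖ = Real.sqrt D / σ^2 := by
    rw [Complex.norm_def, hnormSq, show σ^4 = (σ^2)^2 by ring,
      Real.sqrt_div hD.le, Real.sqrt_sq (by positivity)]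
  rw [F_val hσ hc a, J1_val hs c a.re, J1_val hs c a.im]
  set J0re := ∫ x, Complex.exp (Complex.I * c * ((a.re + x : ℝ) : ℂ) ^ 2)
      ∂(gaussianReal 0 s.toNNReal) with hJ0re
  set J0im := ∫ y, Complex.exp (Complex.I * c * ((a.im + y : ℝ) : ℂ) ^ 2)
      ∂(gaussianReal 0 s.toNNReal) with hJ0im
  have hco : ∀ u v : ℝ, (-(2 * Complex.I * c * (u:ℂ)) / (2 * b)) * J0re * J0im +
      Complex.I * (J0re * ((-(2 * Complex.I * c * (v:ℂ)) / (2 * b)) * J0im)) =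
      ((-Complex.I * c / b) * ((u:ℂ) + (v:ℂ) * Complex.I)) * (J0re * J0im) := by
    intro u v
    rw [show -(2 * Complex.I * (c:ℂ) * (u:ℂ)) = 2 * -(Complex.I * c * u) by ring,
      show -(2 * Complex.I * (c:ℂ) * (v:ℂ)) = 2 * -(Complex.I * c * v) by ring,
      mul_div_mul_left _ _ (two_ne_zero), mul_div_mul_left _ _ (two_ne_zero)]
    ring
  rw [hco a.re a.im, Complex.re_add_im, norm_mul, norm_mul, norm_mul]
  have h1 : ‖-Complex.I * c / b‖ = c * σ^2 / Real.sqrt D := by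
    rw [norm_div, habsb]
    simp [Complex.norm_real, _root_.abs_of_pos hc]
    field_simp
  have hDs : (0:ℝ) < Real.sqrt D := Real.sqrt_pos.mpr hD
  rw [h1, hJ0re, hJ0im, hsdef, abs_J0 hσ hc a.re, abs_J0 hσ hc a.im, ← hDdef]
  have hexp : -(σ^2*c^2*a.re^2)/D + -(σ^2*c^2*a.im^2)/D = -(σ^2*c^2*(‖a‖)^2)/D := by
    rw [Complex.sq_norm, Complex.normSq_apply]; ring
  have hss : Real.sqrt (Real.sqrt D) * Real.sqrt (Real.sqrt D) = Real.sqrt D :=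
    Real.mul_self_sqrt (Real.sqrt_nonneg _)
  have hDs2 : (0:ℝ) < Real.sqrt (Real.sqrt D) := Real.sqrt_pos.mpr hDs
  rw [← hexp, Real.exp_add]
  have hDD : Real.sqrt D * Real.sqrt D = D := Real.mul_self_sqrt hD.le
  set E1 := Real.exp (-(σ^2*c^2*a.re^2)/D) with hE1
  set E2 := Real.exp (-(σ^2*c^2*a.im^2)/D) with hE2
  rw [show (Real.sqrt (Real.sqrt D))⁻¹ * E1 * ((Real.sqrt (Real.sqrt D))⁻¹ * E2) =
      ((Real.sqrt (Real.sqrt D)) * (Real.sqrt (Real.sqrt D)))⁻¹ * (E1 * E2) by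
        rw [mul_inv]; ring,
    hss, show c * σ ^ 2 / Real.sqrt D * ‖a‖ * ((Real.sqrt D)⁻¹ * (E1 * E2)) =
      c * σ ^ 2 / (Real.sqrt D * Real.sqrt D) * ‖a‖ * (E1 * E2) by
        rw [div_mul_eq_mul_div, div_mul_eq_mul_div]; field_simp,
    hDD]
  ring

lemma sup_part {σ c : ℝ} (hσ : 0 < σ) (hc : 0 < c) :
    (⨆ a : ℂ, (σ^2*c/(1 + σ^4*c^2)) * ‖a‖ *
        Real.exp (-(σ^2*c^2*(‖a‖)^2)/(1 + σ^4*c^2))) =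
      σ / Real.sqrt (2 * Real.exp 1 * (1 + σ^4*c^2)) := by
  set D : ℝ := 1 + σ^4*c^2 with hDdef
  have hD : 0 < D := by positivity
  have hDs : 0 < Real.sqrt D := Real.sqrt_pos.mpr hD
  have hDD : Real.sqrt D * Real.sqrt D = D := Real.mul_self_sqrt hD.le
  have h2e : (0:ℝ) < 2 * Real.exp 1 := by positivity
  have h2es : 0 < Real.sqrt (2 * Real.exp 1) := Real.sqrt_pos.mpr h2e
  set M : ℝ := σ / Real.sqrt (2 * Real.exp 1 * D) with hMdef
  set α : ℝ := σ^2*c^2/D with hαdef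
  have hα : 0 < α := by positivity
  -- the key inequality
  have key : ∀ r : ℝ, 0 ≤ r →
      (σ^2*c/D) * r * Real.exp (-(σ^2*c^2*r^2)/D) ≤ M := by
    intro r hr
    have hexp : -(σ^2*c^2*r^2)/D = -(α*r^2) := by rw [hαdef]; ring
    rw [hexp]
    set u : ℝ := 2*α*r^2 with hudef
    have hu0 : 0 ≤ u := by positivity
    have hue : u * Real.exp (-u) ≤ Real.exp (-1) := by
      have h := Real.add_one_le_exp (u - 1)
      calc u * Real.exp (-u) ≤ Real.exp (u-1) * Real.exp (-u) :=
            mul_le_mul_of_nonneg_right (by linarith) (Real.exp_pos _).le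
        _ = Real.exp (-1) := by rw [← Real.exp_add]; ring_nf
    have hsqle : (r * Real.exp (-(α*r^2)))^2 ≤ 1/(2*Real.exp 1*α) := by
      have hr2 : r^2 = u / (2*α) := by rw [hudef]; field_simp
      have h1 : (r * Real.exp (-(α*r^2)))^2 = (u * Real.exp (-u)) / (2*α) := by
        rw [mul_pow, sq (Real.exp (-(α*r^2))), ← Real.exp_add,
          show -(α*r^2) + -(α*r^2) = -u by rw [hudef]; ring, hr2]
        ring
      rw [h1]
      rw [div_le_div_iff₀ (by positivity) (by positivity)]
      calc u * Real.exp (-u) * (2*Real.exp 1*α) ≤ Real.exp (-1) * (2*Real.exp 1*α) :=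
            mul_le_mul_of_nonneg_right hue (by positivity)
        _ = 1 * (2*α) := by
            rw [Real.exp_neg]
            field_simp [Real.exp_ne_zero]
    have habs : r * Real.exp (-(α*r^2)) ≤ Real.sqrt (1/(2*Real.exp 1*α)) := by
      rw [show r * Real.exp (-(α*r^2)) = Real.sqrt ((r * Real.exp (-(α*r^2)))^2) by
        rw [Real.sqrt_sq (by positivity)]]
      exact Real.sqrt_le_sqrt hsqle
    have hsqrtval : Real.sqrt (1/(2*Real.exp 1*α)) = Real.sqrt D / (Real.sqrt (2*Real.exp 1) * (σ*c)) := by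
      have hshow : 1/(2*Real.exp 1*(σ^2*c^2/D)) = D / ((2*Real.exp 1) * (σ*c)^2) := by
        rw [div_eq_div_iff (by positivity) (by positivity)]
        field_simp
      rw [hαdef, hshow]
      rw [Real.sqrt_div hD.le, Real.sqrt_mul h2e.le, Real.sqrt_sq (by positivity)]
    calc (σ^2*c/D) * r * Real.exp (-(α*r^2)) = (σ^2*c/D) * (r * Real.exp (-(α*r^2))) := by ring
      _ ≤ (σ^2*c/D) * (Real.sqrt D / (Real.sqrt (2*Real.exp 1) * (σ*c))) := by
          apply mul_le_mul_of_nonneg_left (habs.trans_eq hsqrtval) (by positivity)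
      _ = M := by
          rw [hMdef, Real.sqrt_mul h2e.le, div_mul_div_comm]
          rw [div_eq_div_iff (by positivity) (by positivity)]
          linear_combination σ^2*c*Real.sqrt (2*Real.exp 1)*hDD
  have gub : ∀ a : ℂ, (σ^2*c/D) * ‖a‖ *
      Real.exp (-(σ^2*c^2*(‖a‖)^2)/D) ≤ M :=
    fun a => key _ (norm_nonneg a)

  set r₀ : ℝ := Real.sqrt D / (σ*c*Real.sqrt 2) with hr₀def
  have hr₀pos : 0 < r₀ := by positivity
  have hr₀sq : r₀^2 = D/(σ^2*c^2*2) := by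
    rw [hr₀def, div_pow, Real.sq_sqrt hD.le, mul_pow, mul_pow,
      Real.sq_sqrt (by norm_num : (0:ℝ) ≤ 2)]
  have hatt : (σ^2*c/D) * r₀ * Real.exp (-(σ^2*c^2*r₀^2)/D) = M := by
    have hexp0 : -(σ^2*c^2*r₀^2)/D = -(1/2) := by
      rw [hr₀sq]; field_simp
    have hsqrte : Real.sqrt (Real.exp 1) = Real.exp (1/2) := by
      rw [show Real.exp 1 = Real.exp (1/2) * Real.exp (1/2) by rw [← Real.exp_add]; norm_num,
        Real.sqrt_mul_self (Real.exp_pos _).le]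
    rw [hexp0, hMdef, Real.sqrt_mul h2e.le, Real.sqrt_mul (by norm_num : (0:ℝ) ≤ 2),
      hsqrte, Real.exp_neg, hr₀def]
    have he2 : (0:ℝ) < Real.exp (1/2) := Real.exp_pos _
    have hs2 : (0:ℝ) < Real.sqrt 2 := Real.sqrt_pos.mpr (by norm_num)
    rw [show σ^2*c/D * (Real.sqrt D/(σ*c*Real.sqrt 2)) * (Real.exp (1/2))⁻¹ =
      (σ^2*c*Real.sqrt D) / (D*(σ*c*Real.sqrt 2)*Real.exp (1/2)) by
        field_simp]
    rw [div_eq_div_iff (by positivity) (by positivity)]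
    linear_combination σ^2*c*Real.sqrt 2*Real.exp (1/2)*hDD
  apply le_antisymm
  · exact ciSup_le gub
  · have hb : BddAbove (Set.range fun a : ℂ => (σ^2*c/D) * ‖a‖ *
        Real.exp (-(σ^2*c^2*(‖a‖)^2)/D)) := ⟨M, by rintro x ⟨a, rfl⟩; exact gub a⟩
    have hle := le_ciSup hb ((r₀ : ℝ) : ℂ)
    have habsr : ‖((r₀:ℝ):ℂ)‖ = r₀ := by
      rw [Complex.norm_real, Real.norm_eq_abs, _root_.abs_of_pos hr₀pos]
    rw [habsr] at hle
    calc M = (σ^2*c/D) * r₀ * Real.exp (-(σ^2*c^2*r₀^2)/D) := hatt.symm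
      _ ≤ _ := hle

theorem sup_abs_expectation_noise_times_phase
    {Ω : Type*} [MeasureSpace Ω] {μ : Measure Ω} [IsProbabilityMeasure μ]
    (σ c : ℝ) (hσ : 0 < σ) (hc : 0 < c)
    (n : Ω → ℂ) (hn : Measurable n)
    (hlaw : Measure.map n μ = complexGaussian (σ ^ 2)) :
    (⨆ a : ℂ,
        ‖∫ ω, n ω * Complex.exp (Complex.I * c * (‖a + n ω‖) ^ 2) ∂μ‖) =
      σ / Real.sqrt (2 * Real.exp 1 * (1 + σ ^ 4 * c ^ 2)) := by
  have hstep : ∀ a : ℂ,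
      (∫ ω, n ω * Complex.exp (Complex.I * c * ((‖a + n ω‖ : ℝ) : ℂ) ^ 2) ∂μ) =
      ∫ z, z * Complex.exp (Complex.I * c * ((‖a + z‖ : ℝ) : ℂ) ^ 2)
        ∂(complexGaussian (σ ^ 2)) := by
    intro a
    rw [← hlaw, integral_map hn.aemeasurable
      (by apply Continuous.aestronglyMeasurable; continuity)]
  calc (⨆ a : ℂ,
        ‖∫ ω, n ω * Complex.exp (Complex.I * c * (‖a + n ω‖) ^ 2) ∂μ‖)
      = ⨆ a : ℂ, (σ^2*c/(1 + σ^4*c^2)) * ‖a‖ *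
          Real.exp (-(σ^2*c^2*(‖a‖)^2)/(1 + σ^4*c^2)) := by
        refine iSup_congr fun a => ?_
        rw [hstep a, abs_F hσ hc a]
    _ = σ / Real.sqrt (2 * Real.exp 1 * (1 + σ ^ 4 * c ^ 2)) := sup_part hσ hc
end

section
/- Let n ∼ CN(0, σ²), a ∈ ℂ, c > 0. Then |a|·|E[exp(i·c·|a+n|²)]| = (|a|/√(1+σ⁴c²))·exp(−σ²c²|a|²/(1+σ⁴c²)), and its supremum over a ∈ ℂ equals 1/(√(2e)·σ·c). -/
open Real MeasureTheory ProbabilityTheory Complex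


lemma gaussian_cexp_integral (v : ℝ) (hv : 0 < v) (c m : ℝ) :
    ∫ x : ℝ, Complex.exp (Complex.I * c * ((m : ℂ) + (x : ℂ)) ^ 2)
        ∂(gaussianReal 0 v.toNNReal)
      = ((Real.sqrt (2 * π * v) : ℝ) : ℂ)⁻¹
          * ((π : ℂ) / -(Complex.I * c - 1 / (2 * v))) ^ (1/2 : ℂ)
          * Complex.exp ((Complex.I * c + c ^ 2 / (Complex.I * c - 1 / (2 * v))) * (m : ℂ) ^ 2) := by
  have hv' : v.toNNReal ≠ 0 := by
    simp only [ne_eq, Real.toNNReal_eq_zero, not_le]; exact hv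
  have hvC : (v : ℂ) ≠ 0 := by exact_mod_cast hv.ne'
  set b : ℂ := Complex.I * c - 1 / (2 * v) with hb_def
  have hbre : b = Complex.I * c - ((1 / (2 * v) : ℝ) : ℂ) := by push_cast; ring
  have hb : b.re < 0 := by
    rw [hbre]; simp [Complex.sub_re, Complex.mul_re]
    positivity
  have hbne : b ≠ 0 := by
    intro h; rw [h] at hb; simp at hb
  rw [gaussianReal_of_var_ne_zero _ hv']
  have hpdf : gaussianPDF 0 v.toNNReal
      = fun x => ((Real.toNNReal (gaussianPDFReal 0 v.toNNReal x) : NNReal) : ENNReal) := rfl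
  rw [hpdf, integral_withDensity_eq_integral_smul
    ((measurable_gaussianPDFReal 0 v.toNNReal).real_toNNReal) _]
  have key : ∀ x : ℝ, (Real.toNNReal (gaussianPDFReal 0 v.toNNReal x))
        • Complex.exp (Complex.I * c * ((m : ℂ) + (x : ℂ)) ^ 2)
      = ((Real.sqrt (2 * π * v) : ℝ) : ℂ)⁻¹
          * Complex.exp (b * x^2 + (2 * Complex.I * c * m) * x + Complex.I * c * m^2) := by
    intro x
    rw [NNReal.smul_def, Real.coe_toNNReal _ (gaussianPDFReal_nonneg _ _ _),
      Complex.real_smul]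
    rw [gaussianPDFReal]
    have hc : ((v.toNNReal : ℝ)) = v := Real.coe_toNNReal v hv.le
    rw [hc]
    push_cast
    rw [mul_assoc, ← Complex.exp_add]
    congr 1
    rw [hb_def]
    field_simp [hvC]
    ring
  simp_rw [key]
  rw [integral_const_mul, integral_cexp_quadratic hb, ← mul_assoc]
  congr 1
  congr 1
  field_simp [hbne]
  ring_nf
  have hI3 : Complex.I ^ 3 = -Complex.I := by
    rw [pow_succ, Complex.I_sq]; ring
  simp only [Complex.I_sq, hI3]
  ring

lemma integral_complexGaussian_cexp (σ c : ℝ) (hσ : 0 < σ) (hc : 0 < c) (a : ℂ) :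
    ∫ z : ℂ, Complex.exp (Complex.I * c * ((‖a + z‖ : ℝ) : ℂ) ^ 2)
        ∂(complexGaussian (σ ^ 2))
      = Complex.exp ((Complex.I * c + c ^ 2 / (Complex.I * c - 1 / ((σ : ℂ) ^ 2)))
            * ((‖a‖ : ℝ) : ℂ) ^ 2)
          / (1 - Complex.I * (σ : ℂ) ^ 2 * c) := by
  have hσ2 : (0:ℝ) < σ ^ 2 / 2 := by positivity
  have hσC : ((σ : ℂ)) ≠ 0 := by exact_mod_cast hσ.ne'
  have hcont : Continuous fun z : ℂ =>
      Complex.exp (Complex.I * c * ((‖a + z‖ : ℝ) : ℂ) ^ 2) := by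
    apply Continuous.cexp
    apply Continuous.mul continuous_const
    apply Continuous.pow
    exact Complex.continuous_ofReal.comp (continuous_norm.comp (by continuity))
  rw [complexGaussian, integral_map (by fun_prop) hcont.aestronglyMeasurable]
  have hpt : ∀ p : ℝ × ℝ,
      Complex.exp (Complex.I * c * ((‖a + ((p.1 : ℂ) + p.2 * Complex.I)‖ : ℝ) : ℂ) ^ 2)
        = Complex.exp (Complex.I * c * ((a.re + p.1 : ℝ) : ℂ) ^ 2)
          * Complex.exp (Complex.I * c * ((a.im + p.2 : ℝ) : ℂ) ^ 2) := by
    intro p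
    rw [← Complex.exp_add]
    congr 1
    have habs : (‖a + ((p.1 : ℂ) + p.2 * Complex.I)‖)^2
        = (a.re + p.1)^2 + (a.im + p.2)^2 := by
      rw [Complex.sq_norm, Complex.normSq_apply]
      simp
      ring
    calc Complex.I * c * ((‖a + ((p.1 : ℂ) + p.2 * Complex.I)‖ : ℝ) : ℂ) ^ 2
        = Complex.I * c * (((‖a + ((p.1 : ℂ) + p.2 * Complex.I)‖)^2 : ℝ) : ℂ) := by
          push_cast; ring
      _ = Complex.I * c * (((a.re + p.1)^2 + (a.im + p.2)^2 : ℝ) : ℂ) := by rw [habs]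
      _ = _ := by push_cast; ring
  simp_rw [hpt]
  rw [integral_prod_mul (f := fun x : ℝ => Complex.exp (Complex.I * c * ((a.re + x : ℝ) : ℂ)^2))
    (g := fun y : ℝ => Complex.exp (Complex.I * c * ((a.im + y : ℝ) : ℂ)^2))]
  simp_rw [Complex.ofReal_add]
  rw [gaussian_cexp_integral _ hσ2 c a.re, gaussian_cexp_integral _ hσ2 c a.im]
  have h2v : (2 * ((σ^2/2 : ℝ) : ℂ)) = (σ:ℂ)^2 := by push_cast; ring
  rw [h2v]
  set b : ℂ := Complex.I * c - 1 / ((σ:ℂ)^2) with hb_def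
  have hbre2 : b = Complex.I*(c:ℂ) - ((1/σ^2 : ℝ):ℂ) := by rw [hb_def]; push_cast; ring
  have hbne : b ≠ 0 := by
    intro h
    have h2 := congrArg Complex.im h
    rw [hbre2] at h2
    simp [pow_two] at h2
    exact hc.ne' (by linarith)
  have hπ : ((π:ℝ):ℂ) ≠ 0 := by exact_mod_cast Real.pi_ne_zero
  have hπb : ((π:ℂ) / -b) ≠ 0 := by
    apply div_ne_zero hπ
    simpa using hbne
  have hsq : (((π:ℂ) / -b) ^ (1/2 : ℂ)) * (((π:ℂ) / -b) ^ (1/2 : ℂ)) = (π:ℂ) / -b := by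
    rw [← Complex.cpow_add _ _ hπb]
    norm_num
  have hsqrt : (Real.sqrt (2 * π * (σ^2/2)))^2 = π * σ^2 := by
    rw [Real.sq_sqrt (by positivity)]; ring
  have habs2 : ((a.re:ℂ))^2 + ((a.im:ℂ))^2 = ((‖a‖ : ℝ) : ℂ)^2 := by
    have h' : (‖a‖)^2 = a.re^2 + a.im^2 := by
      rw [Complex.sq_norm, Complex.normSq_apply]; ring
    calc ((a.re:ℂ))^2 + ((a.im:ℂ))^2 = (((a.re^2 + a.im^2 : ℝ)):ℂ) := by push_cast; ring
      _ = _ := by rw [← h']; push_cast; ring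
  have hden : (1 : ℂ) - Complex.I * (σ:ℂ)^2 * c ≠ 0 := by
    intro h
    have h2 := congrArg Complex.im h
    simp [Complex.sub_im, Complex.mul_im, Complex.mul_re, pow_two] at h2
    rcases h2 with h2 | h2
    · exact hσ.ne' h2
    · exact hc.ne' h2
  have hconst : (((π * σ^2 : ℝ)):ℂ)⁻¹ * ((π:ℂ)/(-b)) = 1/(1 - Complex.I*(σ:ℂ)^2*(c:ℂ)) := by
    rw [hb_def]
    push_cast
    have hb2 : -(Complex.I * (c:ℂ) - 1 / (σ:ℂ)^2) = (1 - Complex.I*(σ:ℂ)^2*c) / (σ:ℂ)^2 := by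
      field_simp; ring
    rw [hb2]
    field_simp
  calc ((Real.sqrt (2*π*(σ^2/2)) : ℝ):ℂ)⁻¹ * ((π:ℂ)/(-b))^(1/2:ℂ)
          * Complex.exp ((Complex.I*c + (c:ℂ)^2/b) * (a.re:ℂ)^2)
        * (((Real.sqrt (2*π*(σ^2/2)) : ℝ):ℂ)⁻¹ * ((π:ℂ)/(-b))^(1/2:ℂ)
          * Complex.exp ((Complex.I*c + (c:ℂ)^2/b) * (a.im:ℂ)^2))
      = ((((Real.sqrt (2*π*(σ^2/2)) : ℝ):ℂ))⁻¹)^2 * (((π:ℂ)/(-b))^(1/2:ℂ))^2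
          * Complex.exp ((Complex.I*c + (c:ℂ)^2/b) * ((a.re:ℂ)^2 + (a.im:ℂ)^2)) := by
        rw [mul_add, Complex.exp_add]
        ring
    _ = _ := by
        rw [sq (((π:ℂ)/(-b))^(1/2:ℂ)), hsq, habs2, inv_pow]
        have hC : (((Real.sqrt (2*π*(σ^2/2)) : ℝ):ℂ)^2) = ((π * σ^2 : ℝ) : ℂ) := by
          exact_mod_cast congrArg Complex.ofReal hsqrt
        rw [hC, hconst, one_div, inv_mul_eq_div]

lemma aux_exp_bound (u : ℝ) (hu : 0 ≤ u) :
    u * Real.exp (-(u^2/2)) ≤ Real.exp (-(1/2)) := by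
  rcases eq_or_lt_of_le hu with h | h
  · rw [← h]
    simp
    positivity
  · have hlog : Real.log (u^2) ≤ u^2 - 1 := Real.log_le_sub_one_of_pos (by positivity)
    rw [Real.log_pow] at hlog
    push_cast at hlog
    have h1 : u * Real.exp (-(u^2/2)) = Real.exp (Real.log u - u^2/2) := by
      rw [show Real.log u - u^2/2 = Real.log u + (-(u^2/2)) by ring, Real.exp_add,
        Real.exp_log h]
    rw [h1]
    apply Real.exp_le_exp.mpr
    linarith
lemma sqrt_exp_one : Real.sqrt (Real.exp 1) = Real.exp (1/2) := by
  rw [show Real.exp 1 = Real.exp (1/2) * Real.exp (1/2) by rw [← Real.exp_add]; norm_num]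
  exact Real.sqrt_mul_self (Real.exp_pos _).le

theorem abs_expectation_phase_and_sup
    {Ω : Type*} [MeasureSpace Ω] {μ : Measure Ω} [IsProbabilityMeasure μ]
    (σ c : ℝ) (hσ : 0 < σ) (hc : 0 < c)
    (n : Ω → ℂ) (hn : Measurable n)
    (hlaw : Measure.map n μ = complexGaussian (σ ^ 2)) :
    (∀ a : ℂ,
      ‖a‖ *
          ‖∫ ω, Complex.exp (Complex.I * c * (‖a + n ω‖) ^ 2) ∂μ‖ =
        (‖a‖ / Real.sqrt (1 + σ ^ 4 * c ^ 2)) *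
          Real.exp (-σ ^ 2 * c ^ 2 * (‖a‖) ^ 2 / (1 + σ ^ 4 * c ^ 2))) ∧
      (⨆ a : ℂ,
          ‖a‖ *
            ‖∫ ω, Complex.exp (Complex.I * c * (‖a + n ω‖) ^ 2) ∂μ‖) =
        1 / (Real.sqrt (2 * Real.exp 1) * σ * c) := by
  have hS : (0:ℝ) < 1 + σ^4*c^2 := by positivity
  have hσC : ((σ : ℂ)) ≠ 0 := by exact_mod_cast hσ.ne'
  have hcC : ((c : ℂ)) ≠ 0 := by exact_mod_cast hc.ne'
  have hden : (1 : ℂ) - Complex.I * (σ:ℂ)^2 * c ≠ 0 := by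
    intro h
    have h2 := congrArg Complex.im h
    simp [pow_two] at h2
    rcases h2 with h2 | h2
    · exact hσ.ne' h2
    · exact hc.ne' h2
  have hbne : Complex.I * (c:ℂ) - 1 / ((σ:ℂ)^2) ≠ 0 := by
    intro h
    have h2 := congrArg Complex.im h
    simp [pow_two] at h2
    exact hc.ne' (by linarith)
  -- value of the integral
  have key : ∀ a : ℂ, (∫ ω, Complex.exp (Complex.I * c * (‖a + n ω‖) ^ 2) ∂μ)
      = Complex.exp ((Complex.I * c + c ^ 2 / (Complex.I * c - 1 / ((σ : ℂ) ^ 2)))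
            * ((‖a‖ : ℝ) : ℂ) ^ 2)
          / (1 - Complex.I * (σ : ℂ) ^ 2 * c) := by
    intro a
    have hcont : Continuous fun z : ℂ =>
        Complex.exp (Complex.I * c * ((‖a + z‖ : ℝ) : ℂ) ^ 2) := by
      apply Continuous.cexp
      apply Continuous.mul continuous_const
      apply Continuous.pow
      exact Complex.continuous_ofReal.comp (continuous_norm.comp (by continuity))
    have hmap : (∫ ω, Complex.exp (Complex.I * c * (‖a + n ω‖) ^ 2) ∂μ)
        = ∫ z, Complex.exp (Complex.I * c * ((‖a + z‖ : ℝ) : ℂ) ^ 2)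
            ∂(Measure.map n μ) := by
      rw [integral_map hn.aemeasurable]
      rw [hlaw]
      exact hcont.aestronglyMeasurable
    rw [hmap, hlaw, integral_complexGaussian_cexp σ c hσ hc a]
  -- the real part of the exponent
  have hK : (Complex.I * c + c ^ 2 / (Complex.I * c - 1 / ((σ : ℂ) ^ 2)))
      = Complex.I * c / (1 - Complex.I * (σ:ℂ)^2 * c) := by
    have hI3 : Complex.I ^ 3 = -Complex.I := by rw [pow_succ, Complex.I_sq]; ring
    rw [add_div' _ _ _ hbne, div_eq_div_iff hbne hden]
    ring_nf
    simp only [Complex.I_sq, hI3]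
    linear_combination (-(c:ℂ)^2) * mul_inv_cancel₀ (pow_ne_zero 2 hσC)
  have hKre : (Complex.I * (c:ℂ) / (1 - Complex.I * (σ:ℂ)^2 * (c:ℂ))).re
      = -σ^2*c^2/(1+σ^4*c^2) := by
    rw [Complex.div_re]
    simp [Complex.normSq_apply, pow_two]
    ring
  have habsden : ‖1 - Complex.I*(σ:ℂ)^2*(c:ℂ)‖ = Real.sqrt (1 + σ^4*c^2) := by
    rw [Complex.norm_def, Complex.normSq_apply]
    congr 1
    simp [pow_two]
    ring
  have h1 : ∀ a : ℂ,
      ‖a‖ *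
          ‖∫ ω, Complex.exp (Complex.I * c * (‖a + n ω‖) ^ 2) ∂μ‖ =
        (‖a‖ / Real.sqrt (1 + σ ^ 4 * c ^ 2)) *
          Real.exp (-σ ^ 2 * c ^ 2 * (‖a‖) ^ 2 / (1 + σ ^ 4 * c ^ 2)) := by
    intro a
    rw [key a, norm_div, Complex.norm_exp, habsden]
    have hre : ((Complex.I * c + c ^ 2 / (Complex.I * c - 1 / ((σ : ℂ) ^ 2)))
        * ((‖a‖ : ℝ) : ℂ) ^ 2).re
        = -σ ^ 2 * c ^ 2 * (‖a‖) ^ 2 / (1 + σ ^ 4 * c ^ 2) := by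
      rw [hK]
      rw [show (Complex.I * (c:ℂ) / (1 - Complex.I * (σ:ℂ)^2 * (c:ℂ)))
            * ((‖a‖ : ℝ) : ℂ) ^ 2
          = (((‖a‖)^2 : ℝ) : ℂ)
            * (Complex.I * (c:ℂ) / (1 - Complex.I * (σ:ℂ)^2 * (c:ℂ))) from by push_cast; ring]
      rw [Complex.re_ofReal_mul, hKre]
      ring
    rw [hre]
    ring
  refine ⟨h1, ?_⟩
  simp only [h1]
  -- supremum computation
  set M : ℝ := 1 / (Real.sqrt (2 * Real.exp 1) * σ * c) with hM_def
  have hsqrt2e : Real.sqrt (2 * Real.exp 1) = Real.sqrt 2 * Real.exp (1/2) := by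
    rw [Real.sqrt_mul (by norm_num : (0:ℝ) ≤ 2), sqrt_exp_one]
  have hmain : ∀ r : ℝ, 0 ≤ r →
      r / Real.sqrt (1 + σ ^ 4 * c ^ 2) *
        Real.exp (-σ ^ 2 * c ^ 2 * r ^ 2 / (1 + σ ^ 4 * c ^ 2)) ≤ M := by
    intro r hr
    have h2sc : (0:ℝ) < Real.sqrt 2 * σ * c := by positivity
    rw [← mul_le_mul_iff_left₀ h2sc]
    set u : ℝ := Real.sqrt 2 * σ * c * r / Real.sqrt (1 + σ ^ 4 * c ^ 2) with hu_def
    have hSsq : (Real.sqrt (1 + σ ^ 4 * c ^ 2))^2 = 1 + σ^4*c^2 := Real.sq_sqrt hS.le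
    have hu2 : u^2 = 2*σ^2*c^2*r^2/(1+σ^4*c^2) := by
      rw [hu_def, div_pow, hSsq, show (Real.sqrt 2*σ*c*r)^2
        = (Real.sqrt 2)^2*(σ^2*c^2*r^2) by ring, Real.sq_sqrt (by norm_num : (0:ℝ) ≤ 2)]
      ring
    have husq : -(u^2/2) = -σ ^ 2 * c ^ 2 * r ^ 2 / (1 + σ ^ 4 * c ^ 2) := by
      rw [hu2]; ring
    have hLHS : r / Real.sqrt (1 + σ ^ 4 * c ^ 2) *
          Real.exp (-σ ^ 2 * c ^ 2 * r ^ 2 / (1 + σ ^ 4 * c ^ 2)) * (Real.sqrt 2 * σ * c)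
        = u * Real.exp (-(u^2/2)) := by
      rw [husq, hu_def]
      ring
    have hRHS : M * (Real.sqrt 2 * σ * c) = Real.exp (-(1/2)) := by
      rw [hM_def, hsqrt2e, Real.exp_neg]
      field_simp
    rw [hLHS, hRHS]
    exact aux_exp_bound u (by positivity)
  apply le_antisymm
  · exact ciSup_le fun a => hmain (‖a‖) (norm_nonneg a)
  · set r₀ : ℝ := Real.sqrt (1 + σ ^ 4 * c ^ 2) / (Real.sqrt 2 * σ * c) with hr0_def
    have hr0 : (0:ℝ) < r₀ := by positivity
    have hbdd : BddAbove (Set.range fun a : ℂ =>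
        ‖a‖ / Real.sqrt (1 + σ ^ 4 * c ^ 2) *
          Real.exp (-σ ^ 2 * c ^ 2 * ‖a‖ ^ 2 / (1 + σ ^ 4 * c ^ 2))) := by
      refine ⟨M, ?_⟩
      rintro x ⟨a, rfl⟩
      exact hmain (‖a‖) (norm_nonneg a)
    have habs_r0 : ‖((r₀ : ℝ) : ℂ)‖ = r₀ := by
      rw [Complex.norm_real, Real.norm_eq_abs, abs_of_pos hr0]
    have hval : ‖((r₀ : ℝ) : ℂ)‖ / Real.sqrt (1 + σ ^ 4 * c ^ 2) *
          Real.exp (-σ ^ 2 * c ^ 2 * ‖((r₀:ℝ):ℂ)‖ ^ 2 / (1 + σ ^ 4 * c ^ 2)) = M := by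
      rw [habs_r0]
      have hSsq : (Real.sqrt (1 + σ ^ 4 * c ^ 2))^2 = 1 + σ^4*c^2 := Real.sq_sqrt hS.le
      have hr0sq : r₀^2 = (1+σ^4*c^2)/(2*σ^2*c^2) := by
        rw [hr0_def, div_pow, hSsq, show (Real.sqrt 2*σ*c)^2
          = (Real.sqrt 2)^2*(σ^2*c^2) by ring, Real.sq_sqrt (by norm_num : (0:ℝ) ≤ 2)]
        ring
      have h2 : -σ ^ 2 * c ^ 2 * r₀ ^ 2 / (1 + σ ^ 4 * c ^ 2) = -(1/2) := by
        rw [hr0sq]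
        field_simp
      have h3 : r₀ / Real.sqrt (1 + σ ^ 4 * c ^ 2) = 1 / (Real.sqrt 2 * σ * c) := by
        rw [hr0_def]
        field_simp
      rw [h2, h3, hM_def, hsqrt2e, Real.exp_neg]
      rw [div_mul_eq_mul_div, one_mul]
      field_simp
    exact le_ciSup_of_le hbdd ((r₀ : ℝ) : ℂ) (le_of_eq hval.symm)
end

section
/- For a complex random variable X with density, h(X) ≤ h(|X|²) + log π, where h denotes differential entropy (of X viewed as a 2-dimensional real vector on the left, and of the real random variable |X|² on the right). -/
open Real MeasureTheory ProbabilityTheory Set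

lemma lintegral_comp_polarCoord_symm_aux (G : ℝ × ℝ → ENNReal) :
    ∫⁻ p, G p = ∫⁻ p in polarCoord.target, ENNReal.ofReal p.1 * G (polarCoord.symm p) := by
  set B : ℝ × ℝ → ℝ × ℝ →L[ℝ] ℝ × ℝ := fun p =>
    LinearMap.toContinuousLinearMap (Matrix.toLin (Module.Basis.finTwoProd ℝ) (Module.Basis.finTwoProd ℝ)
      !![Real.cos p.2, -p.1 * Real.sin p.2; Real.sin p.2, p.1 * Real.cos p.2])
  have A : ∀ p ∈ polarCoord.target, HasFDerivWithinAt polarCoord.symm (B p) polarCoord.target p :=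
    fun p _ => (hasFDerivAt_polarCoord_symm p).hasFDerivWithinAt
  have B_det : ∀ p, (B p).det = p.1 := by
    intro p
    conv_rhs => rw [← one_mul p.1, ← cos_sq_add_sin_sq p.2]
    simp only [B, neg_mul, LinearMap.det_toContinuousLinearMap, LinearMap.det_toLin,
      Matrix.det_fin_two_of, sub_neg_eq_add]
    ring
  calc
    ∫⁻ p, G p = ∫⁻ p in polarCoord.source, G p := by
      rw [← setLIntegral_univ]
      exact (setLIntegral_congr polarCoord_source_ae_eq_univ).symm
    _ = ∫⁻ p in polarCoord.symm '' polarCoord.target, G p := by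
      rw [polarCoord.symm_image_target_eq_source]
    _ = ∫⁻ p in polarCoord.target, ENNReal.ofReal |(B p).det| * G (polarCoord.symm p) := by
      apply lintegral_image_eq_lintegral_abs_det_fderiv_mul volume
        polarCoord.open_target.measurableSet A polarCoord.symm.injOn G
    _ = _ := by
      apply setLIntegral_congr_fun_ae polarCoord.open_target.measurableSet
      filter_upwards with x hx
      rw [B_det, abs_of_pos hx.1]

lemma Complex.lintegral_comp_polarCoord_symm_aux (G : ℂ → ENNReal) :
    ∫⁻ z, G z = ∫⁻ p in polarCoord.target, ENNReal.ofReal p.1 * G (Complex.polarCoord.symm p) := by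
  have h0 : (volume : Measure ℂ) = Measure.map Complex.measurableEquivRealProd.symm volume :=
    (Complex.volume_preserving_equiv_real_prod.symm _).map_eq.symm
  rw [h0, lintegral_map_equiv G Complex.measurableEquivRealProd.symm,
    _root_.lintegral_comp_polarCoord_symm_aux fun p => G (Complex.measurableEquivRealProd.symm p)]
  rfl

lemma lintegral_sq_subst_aux (w : ℝ → ENNReal) :
    ∫⁻ t in Ioi (0:ℝ), w t = ∫⁻ r in Ioi (0:ℝ), ENNReal.ofReal (2*r) * w (r^2) := by
  have himg : (fun x : ℝ => x ^ 2) '' Ioi 0 = Ioi 0 := by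
    ext y
    constructor
    · rintro ⟨x, hx, rfl⟩; exact pow_pos (show (0:ℝ) < x from hx) 2
    · intro hy
      exact ⟨Real.sqrt y, Real.sqrt_pos.mpr hy, Real.sq_sqrt hy.le⟩
  have hderiv : ∀ x ∈ Ioi (0:ℝ), HasFDerivWithinAt (fun x : ℝ => x ^ 2)
      ((1 : ℝ →L[ℝ] ℝ).smulRight (2*x)) (Ioi 0) x := by
    intro x _
    have := (hasDerivAt_pow 2 x).hasDerivWithinAt (s := Ioi 0)
    simpa [pow_one, ContinuousLinearMap.smulRight_one_eq_toSpanSingleton] using this.hasFDerivWithinAt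
  have hinj : InjOn (fun x : ℝ => x ^ 2) (Ioi 0) := by
    intro a ha b hb h
    simp only [mem_Ioi] at ha hb
    dsimp at h
    exact le_antisymm (by nlinarith) (by nlinarith)
  calc ∫⁻ t in Ioi (0:ℝ), w t
      = ∫⁻ t in (fun x : ℝ => x ^ 2) '' Ioi 0, w t := by rw [himg]
    _ = ∫⁻ x in Ioi (0:ℝ), ENNReal.ofReal |((1 : ℝ →L[ℝ] ℝ).smulRight (2*x)).det| * w (x^2) :=
        lintegral_image_eq_lintegral_abs_det_fderiv_mul volume measurableSet_Ioi hderiv hinj w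
    _ = _ := by
        apply setLIntegral_congr_fun_ae measurableSet_Ioi
        filter_upwards with x hx
        rw [ContinuousLinearMap.smulRight_one_eq_toSpanSingleton, ContinuousLinearMap.det_toSpanSingleton, abs_of_pos (by simp only [mem_Ioi] at hx; linarith : (0:ℝ) < 2*x)]

lemma lintegral_complex_abs_sq_aux (g : ℝ → ℝ) (hgmeas : Measurable g) :
    ∫⁻ z : ℂ, ENNReal.ofReal (g (‖z‖ ^ 2))
      = ENNReal.ofReal π * ∫⁻ t in Ioi (0:ℝ), ENNReal.ofReal (g t) := by
  set w : ℝ → ENNReal := fun t => ENNReal.ofReal (g t) with hw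
  have hwmeas : Measurable w := hgmeas.ennreal_ofReal
  have hm : Measurable fun p : ℝ × ℝ => ENNReal.ofReal p.1 * w (p.1 ^ 2) :=
    measurable_fst.ennreal_ofReal.mul (hwmeas.comp (measurable_fst.pow_const 2))
  have hm2 : Measurable fun r : ℝ => ENNReal.ofReal r * w (r ^ 2) :=
    measurable_id.ennreal_ofReal.mul (hwmeas.comp (measurable_id.pow_const 2))
  rw [Complex.lintegral_comp_polarCoord_symm_aux fun z => w (‖z‖ ^ 2)]
  have h1 : ∫⁻ p in polarCoord.target,
      ENNReal.ofReal p.1 * w (‖Complex.polarCoord.symm p‖ ^ 2)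
      = ∫⁻ p in polarCoord.target, ENNReal.ofReal p.1 * w (p.1 ^ 2) := by
    apply setLIntegral_congr_fun_ae polarCoord.open_target.measurableSet
    filter_upwards with p hp
    rw [Complex.norm_polarCoord_symm, sq_abs]
  rw [h1]
  have h2 : ∫⁻ p in polarCoord.target, ENNReal.ofReal p.1 * w (p.1 ^ 2)
      = (∫⁻ r in Ioi (0:ℝ), ENNReal.ofReal r * w (r ^ 2)) * ENNReal.ofReal (2 * π) := by
    rw [polarCoord_target, Measure.volume_eq_prod, ← Measure.prod_restrict,
      lintegral_prod _ hm.aemeasurable]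
    simp only [lintegral_const, Measure.restrict_apply_univ, Real.volume_Ioo]
    rw [← lintegral_mul_const _ hm2]
    congr 1
    ext r
    congr 1
    ring
  rw [h2, lintegral_sq_subst_aux w]
  have h3 : ∀ r : ℝ, ENNReal.ofReal (2 * r) * w (r ^ 2)
      = 2 * (ENNReal.ofReal r * w (r ^ 2)) := by
    intro r
    rw [ENNReal.ofReal_mul (by norm_num : (0:ℝ) ≤ 2)]
    norm_num [mul_assoc]
  simp_rw [h3]
  rw [lintegral_const_mul 2 hm2, ENNReal.ofReal_mul (by norm_num : (0:ℝ) ≤ 2)]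
  have h4 : ENNReal.ofReal (2:ℝ) = 2 := by norm_num
  rw [h4]
  ring

/-- Transfer of integrals through a law with density. -/
lemma density_transfer_aux {E' : Type*} [MeasurableSpace E'] {ν : Measure E'}
    {Ω : Type*} [MeasurableSpace Ω] {μ : Measure Ω} {Y : Ω → E'} (hY : Measurable Y)
    {d : E' → ℝ} (hd0 : ∀ x, 0 ≤ d x) (hdmeas : Measurable d)
    (hlaw : Measure.map Y μ = ν.withDensity fun x => ENNReal.ofReal (d x))
    {φ : E' → ℝ} (hφ : Measurable φ) :
    (∫ x, d x * φ x ∂ν = ∫ ω, φ (Y ω) ∂μ) ∧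
      (Integrable (fun x => d x * φ x) ν ↔ Integrable (fun ω => φ (Y ω)) μ) := by
  have hkey : (fun x => ENNReal.ofReal (d x)) = fun x => ((d x).toNNReal : ENNReal) := rfl
  have hsmul : (fun x => (d x).toNNReal • φ x) = fun x => d x * φ x := by
    funext x
    rw [NNReal.smul_def, Real.coe_toNNReal _ (hd0 x), smul_eq_mul]
  constructor
  · have h1 := integral_withDensity_eq_integral_smul (hdmeas.real_toNNReal) φ (μ := ν)
    rw [hsmul] at h1
    rw [← h1, ← hkey, ← hlaw, integral_map hY.aemeasurable hφ.aestronglyMeasurable]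
  · have h2 := integrable_withDensity_iff_integrable_smul (μ := ν)
      (hdmeas.real_toNNReal) (g := φ)
    rw [hsmul] at h2
    rw [← h2, ← hkey, ← hlaw,
      integrable_map_measure hφ.aestronglyMeasurable hY.aemeasurable]
    rfl

/-- For a complex random variable `X` with density `f`, whose squared modulus `|X|²`
has density `g`, we have `h(X) ≤ h(|X|²) + log π`. -/
theorem entropy_complex_le_entropy_abs_sq
    {Ω : Type*} [MeasureSpace Ω] {μ : Measure Ω} [IsProbabilityMeasure μ]
    (X : Ω → ℂ) (hX : Measurable X)
    (f : ℂ → ℝ) (hf0 : ∀ z, 0 ≤ f z) (hfmeas : Measurable f)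
    (g : ℝ → ℝ) (hg0 : ∀ t, 0 ≤ g t) (hgmeas : Measurable g)
    (hlawX : Measure.map X μ = (volume : Measure ℂ).withDensity fun z => ENNReal.ofReal (f z))
    (hlawA : Measure.map (fun ω => ‖X ω‖ ^ 2) μ =
      (volume : Measure ℝ).withDensity fun t => ENNReal.ofReal (g t))
    (hfint : Integrable fun z => f z * Real.log (f z))
    (hgint : Integrable fun t => g t * Real.log (g t)) :
    -∫ z, f z * Real.log (f z) ≤ (-∫ t, g t * Real.log (g t)) + Real.log π := by
  have habs : Measurable (fun z : ℂ => ‖z‖) := continuous_norm.measurable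
  have hA : Measurable fun ω => ‖X ω‖ ^ 2 := ((habs.comp hX).pow_const 2)
  have hQmeas : Measurable fun z : ℂ => g (‖z‖ ^ 2) :=
    hgmeas.comp (habs.pow_const 2)
  -- total mass of f
  have hνuniv : (Measure.map X μ) univ = 1 := by
    have : IsProbabilityMeasure (Measure.map X μ) := Measure.isProbabilityMeasure_map hX.aemeasurable
    exact measure_univ
  have hfl1 : ∫⁻ z, ENNReal.ofReal (f z) = 1 := by
    rw [← setLIntegral_univ, ← withDensity_apply _ MeasurableSet.univ, ← hlawX, hνuniv]
  have hρuniv : (Measure.map (fun ω => ‖X ω‖ ^ 2) μ) univ = 1 := by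
    have : IsProbabilityMeasure (Measure.map (fun ω => ‖X ω‖ ^ 2) μ) :=
      Measure.isProbabilityMeasure_map hA.aemeasurable
    exact measure_univ
  have hgl1 : ∫⁻ t, ENNReal.ofReal (g t) = 1 := by
    rw [← setLIntegral_univ, ← withDensity_apply _ MeasurableSet.univ, ← hlawA, hρuniv]
  -- integrability and integral of f
  have hfInt : Integrable f := by
    refine ⟨hfmeas.aestronglyMeasurable, ?_⟩
    rw [hasFiniteIntegral_iff_ofReal (ae_of_all _ hf0), hfl1]
    exact ENNReal.one_lt_top
  have hfint1 : ∫ z, f z = 1 := by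
    rw [integral_eq_lintegral_of_nonneg_ae (ae_of_all _ hf0) hfmeas.aestronglyMeasurable, hfl1]
    simp
  -- g vanishes a.e. on nonpositive reals
  have hX0 : (Measure.map X μ) {(0:ℂ)} = 0 := by
    have hr : (volume : Measure ℂ).restrict {(0:ℂ)} = 0 :=
      Measure.restrict_eq_zero.mpr (measure_singleton 0)
    rw [hlawX, withDensity_apply _ (measurableSet_singleton 0), hr]
    simp
  have hIic : ∫⁻ t in Iic (0:ℝ), ENNReal.ofReal (g t) = 0 := by
    rw [← withDensity_apply _ measurableSet_Iic, ← hlawA,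
      Measure.map_apply hA measurableSet_Iic]
    have hset : (fun ω => ‖X ω‖ ^ 2) ⁻¹' Iic 0 = X ⁻¹' {0} := by
      ext ω
      simp only [mem_preimage, mem_Iic, mem_singleton_iff]
      constructor
      · intro h
        have h1 : ‖X ω‖ ^ 2 = 0 := le_antisymm h (by positivity)
        have h2 : ‖X ω‖ = 0 := sq_eq_zero_iff.mp h1
        exact norm_eq_zero.mp h2
      · intro h
        simp [h]
    rw [hset, ← Measure.map_apply hX (measurableSet_singleton 0), hX0]
  have hgIoi : ∫⁻ t in Ioi (0:ℝ), ENNReal.ofReal (g t) = 1 := by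
    have hcompl := lintegral_add_compl (fun t => ENNReal.ofReal (g t))
      (measurableSet_Ioi (a := (0:ℝ))) (μ := volume)
    rw [compl_Ioi, hIic, add_zero] at hcompl
    rw [hcompl, hgl1]
  -- the lintegral of g(|z|²) over ℂ
  have hK : ∫⁻ z : ℂ, ENNReal.ofReal (g (‖z‖ ^ 2)) = ENNReal.ofReal π := by
    rw [lintegral_complex_abs_sq_aux g hgmeas, hgIoi, mul_one]
  -- integrability and integral of Q
  have hQ0 : ∀ z : ℂ, 0 ≤ g (‖z‖ ^ 2) := fun z => hg0 _
  have hQInt : Integrable fun z : ℂ => g (‖z‖ ^ 2) := by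
    refine ⟨hQmeas.aestronglyMeasurable, ?_⟩
    rw [hasFiniteIntegral_iff_ofReal (ae_of_all _ hQ0), hK]
    exact ENNReal.ofReal_lt_top
  have hQint1 : ∫ z : ℂ, g (‖z‖ ^ 2) = π := by
    rw [integral_eq_lintegral_of_nonneg_ae (ae_of_all _ hQ0) hQmeas.aestronglyMeasurable, hK,
      ENNReal.toReal_ofReal pi_pos.le]
  -- a.e., f z ≠ 0 → g(|z|²) ≠ 0
  have hae : ∀ᵐ z : ℂ, g (‖z‖ ^ 2) = 0 → f z = 0 := by
    have hSmeas : MeasurableSet {z : ℂ | g (‖z‖ ^ 2) = 0} :=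
      hQmeas (measurableSet_singleton 0)
    have hTmeas : MeasurableSet {t : ℝ | g t = 0} := hgmeas (measurableSet_singleton 0)
    have hνS : ∫⁻ z in {z : ℂ | g (‖z‖ ^ 2) = 0}, ENNReal.ofReal (f z) = 0 := by
      rw [← withDensity_apply _ hSmeas, ← hlawX, Measure.map_apply hX hSmeas]
      have hset : X ⁻¹' {z : ℂ | g (‖z‖ ^ 2) = 0}
          = (fun ω => ‖X ω‖ ^ 2) ⁻¹' {t : ℝ | g t = 0} := rfl
      rw [hset, ← Measure.map_apply hA hTmeas, hlawA, withDensity_apply _ hTmeas]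
      have : ∀ᵐ t ∂(volume.restrict {t : ℝ | g t = 0}), ENNReal.ofReal (g t) = 0 := by
        refine (ae_restrict_iff' hTmeas).mpr (ae_of_all _ fun t ht => ?_)
        simp only [mem_setOf_eq] at ht
        simp [ht]
      rw [lintegral_congr_ae this]
      simp
    have h0 : ∀ᵐ z ∂(volume.restrict {z : ℂ | g (‖z‖ ^ 2) = 0}),
        ENNReal.ofReal (f z) = 0 :=
      (lintegral_eq_zero_iff hfmeas.ennreal_ofReal).mp hνS
    have h1 := ae_imp_of_ae_restrict h0
    filter_upwards [h1] with z hz hzg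
    have := hz hzg
    have hle : f z ≤ 0 := ENNReal.ofReal_eq_zero.mp this
    exact le_antisymm hle (hf0 z)
  -- transfer of the cross term
  have htransf := density_transfer_aux hX hf0 hfmeas hlawX
    (φ := fun z => Real.log (g (‖z‖ ^ 2))) (hQmeas.log)
  have htransg := density_transfer_aux hA hg0 hgmeas hlawA
    (φ := fun t => Real.log (g t)) (hgmeas.log)
  have hTransInt : Integrable fun z : ℂ => f z * Real.log (g (‖z‖ ^ 2)) := by
    rw [htransf.2]
    exact (htransg.2).mp hgint
  have hTrans : ∫ z, f z * Real.log (g (‖z‖ ^ 2)) = ∫ t, g t * Real.log (g t) := by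
    rw [htransf.1, htransg.1]
  -- the Gibbs inequality
  have hmono : ∀ᵐ z : ℂ, f z * Real.log (g (‖z‖ ^ 2)) - Real.log π * f z
      + (f z - g (‖z‖ ^ 2) / π) ≤ f z * Real.log (f z) := by
    filter_upwards [hae] with z hz
    by_cases hfz : f z = 0
    · rw [hfz]
      simp only [zero_mul, mul_zero, sub_zero, zero_sub, zero_add]
      have : 0 ≤ g (‖z‖ ^ 2) / π := div_nonneg (hQ0 z) pi_pos.le
      linarith
    · have hfpos : 0 < f z := lt_of_le_of_ne (hf0 z) (Ne.symm hfz)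
      have hQne : g (‖z‖ ^ 2) ≠ 0 := fun h => hfz (hz h)
      have hQpos : 0 < g (‖z‖ ^ 2) := lt_of_le_of_ne (hQ0 z) (Ne.symm hQne)
      have hqpos : 0 < g (‖z‖ ^ 2) / π := div_pos hQpos pi_pos
      have hkey := Real.log_le_sub_one_of_pos (div_pos hqpos hfpos)
      rw [Real.log_div (ne_of_gt hqpos) hfz,
        Real.log_div (ne_of_gt hQpos) (ne_of_gt pi_pos)] at hkey
      have h5 := mul_le_mul_of_nonneg_left hkey hfpos.le
      have h6 : f z * (g (‖z‖ ^ 2) / π / f z - 1)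
          = g (‖z‖ ^ 2) / π - f z := by field_simp
      rw [h6] at h5
      have h7 : f z * (Real.log (g (‖z‖ ^ 2)) - Real.log π - Real.log (f z))
          = f z * Real.log (g (‖z‖ ^ 2)) - Real.log π * f z
            - f z * Real.log (f z) := by ring
      rw [h7] at h5
      linarith
  have hI2 : Integrable fun z : ℂ => Real.log π * f z := hfInt.const_mul _
  have hI4 : Integrable fun z : ℂ => g (‖z‖ ^ 2) / π := hQInt.div_const _
  have hIntAll : Integrable (fun z : ℂ => f z * Real.log (g (‖z‖ ^ 2))
      - Real.log π * f z + (f z - g (‖z‖ ^ 2) / π)) :=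
    (hTransInt.sub hI2).add (hfInt.sub hI4)
  have hI12 : Integrable (fun z : ℂ => f z * Real.log (g (‖z‖ ^ 2))
      - Real.log π * f z) := hTransInt.sub hI2
  have hI34 : Integrable (fun z : ℂ => f z - g (‖z‖ ^ 2) / π) := hfInt.sub hI4
  have hmain := integral_mono_ae hIntAll hfint hmono
  rw [integral_add hI12 hI34, integral_sub hTransInt hI2,
    integral_sub hfInt hI4, integral_const_mul, integral_div, hTrans, hfint1, hQint1,
    div_self (ne_of_gt pi_pos)] at hmain
  linarith
end
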